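/- arXiv:2510.07746 — 3 statements merged into one kernel-verified Lean document; each statement's English description precedes it below -/
import Mathlib

section
/- Fix integers n > k > 1, an n-point dataset X ⊂ ℝ^{n−1}, and a partition C_1 ⊔ ⋯ ⊔ C_k = [n] such that every cluster satisfies |C_m| > 1 and the average silhouette score S̄(X; C_1,…,C_k) is well defined. Then for every 0 < ε ≤ 1 there exists an n-point dataset X_ε ⊂ ℝ^{n−1} with S̄(X_ε; C_1,…,C_k) = ε · S̄(X; C_1,…,C_k), and yet for every perplexity ρ ∈ (1, n−1), TSNE_ρ(X) = TSNE_ρ(X_ε). -/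
open scoped BigOperators RealInnerProductSpace
noncomputable section

namespace TSNEPaper

variable {n k : ℕ} {E F : Type*}

/-- The set of nearest neighbors of point `i` (used for the `σ = 0` limit of the
conditional affinity). -/
def nearestSet [NormedAddCommGroup E] (X : Fin n → E) (i : Fin n) : Finset (Fin n) :=
  (Finset.univ.erase i).filter fun j => ∀ l ∈ Finset.univ.erase i, ‖X i - X j‖ ≤ ‖X i - X l‖

/-- Conditional t-SNE affinity `P_{j|i}(X; σ)`.  For `σ = 0` we take the limiting value
as `σ → 0⁺`, which puts equal mass on the nearest neighbors of `i`. -/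
def condAffinity [NormedAddCommGroup E] (X : Fin n → E) (σ : ℝ) (i j : Fin n) : ℝ :=
  if j = i then 0
  else if σ = 0 then (if j ∈ nearestSet X i then ((nearestSet X i).card : ℝ)⁻¹ else 0)
  else Real.exp (-‖X i - X j‖ ^ 2 / (2 * σ ^ 2)) /
      ∑ l ∈ Finset.univ.erase i, Real.exp (-‖X i - X l‖ ^ 2 / (2 * σ ^ 2))

/-- Base-2 Shannon entropy of a distribution on `Fin n`. -/
def entropy2 (p : Fin n → ℝ) : ℝ := -∑ j, p j * Real.logb 2 (p j)

/-- `σ` is a perplexity-`ρ`-calibrated bandwidth for point `i`: it is nonnegative and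
minimizes the gap between the entropy of `P_{·|i}(X;σ)` and `log₂ ρ`. -/
def IsCalibrated [NormedAddCommGroup E] (X : Fin n → E) (ρ : ℝ) (i : Fin n) (σ : ℝ) : Prop :=
  0 ≤ σ ∧ ∀ σ' : ℝ, 0 ≤ σ' →
    |entropy2 (condAffinity X σ i) - Real.logb 2 ρ| ≤
      |entropy2 (condAffinity X σ' i) - Real.logb 2 ρ|

/-- The calibrated bandwidth `σ_i^*` (well defined by uniqueness of the minimizer). -/
def sigmaStar [NormedAddCommGroup E] (X : Fin n → E) (ρ : ℝ) (i : Fin n) : ℝ :=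
  Classical.epsilon (IsCalibrated X ρ i)

/-- Symmetrized input affinity `P_{ij}(X)`. -/
def inAffinity [NormedAddCommGroup E] (X : Fin n → E) (ρ : ℝ) (i j : Fin n) : ℝ :=
  if i = j then 0
  else (condAffinity X (sigmaStar X ρ j) j i + condAffinity X (sigmaStar X ρ i) i j) / (2 * n)

/-- Output affinity `Q_{ij}(Y)`. -/
def outAffinity [NormedAddCommGroup F] (Y : Fin n → F) (i j : Fin n) : ℝ :=
  if i = j then 0
  else (1 + ‖Y i - Y j‖ ^ 2)⁻¹ /
    ∑ p ∈ Finset.univ.offDiag, (1 + ‖Y p.1 - Y p.2‖ ^ 2)⁻¹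

/-- The t-SNE loss `L_X(Y) = KL(P(X) ‖ Q(Y))`. -/
def tsneLoss {d : ℕ} [NormedAddCommGroup E] (X : Fin n → E) (ρ : ℝ)
    (Y : Fin n → EuclideanSpace ℝ (Fin d)) : ℝ :=
  ∑ p ∈ Finset.univ.offDiag,
    inAffinity X ρ p.1 p.2 * Real.log (inAffinity X ρ p.1 p.2 / outAffinity Y p.1 p.2)

/-- The set of stationary t-SNE outputs in `ℝ^d` for input `X` and perplexity `ρ`. -/
def TSNE [NormedAddCommGroup E] (d : ℕ) (ρ : ℝ) (X : Fin n → E) :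
    Set (Fin n → EuclideanSpace ℝ (Fin d)) :=
  {Y : Fin n → EuclideanSpace ℝ (Fin d) | fderiv ℝ (tsneLoss X ρ) Y = 0}

/-- The image of t-SNE: all stationary outputs over all `n`-point inputs in `ℝ^{n-1}`. -/
def IMTSNE (n d : ℕ) (ρ : ℝ) : Set (Fin n → EuclideanSpace ℝ (Fin d)) :=
  ⋃ X : Fin n → EuclideanSpace ℝ (Fin (n - 1)), TSNE d ρ X

/-- The `m`-th cluster of the partition of `[n]` encoded by the labelling `ℓ`. -/
def cluster (ℓ : Fin n → Fin k) (m : Fin k) : Finset (Fin n) :=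
  Finset.univ.filter fun i => ℓ i = m

/-- Average within-cluster distance `a(i)`. -/
def aScore [NormedAddCommGroup E] (X : Fin n → E) (ℓ : Fin n → Fin k) (i : Fin n) : ℝ :=
  (∑ j ∈ cluster ℓ (ℓ i), ‖X i - X j‖) / (((cluster ℓ (ℓ i)).card : ℝ) - 1)

/-- Closest average across-cluster distance `b(i)`. -/
def bScore [NormedAddCommGroup E] (X : Fin n → E) (ℓ : Fin n → Fin k) (i : Fin n) : ℝ :=
  sInf {r : ℝ | ∃ m : Fin k, m ≠ ℓ i ∧
    r = (∑ j ∈ cluster ℓ m, ‖X i - X j‖) / ((cluster ℓ m).card : ℝ)}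

/-- Silhouette score of point `i`. -/
def silhouette [NormedAddCommGroup E] (X : Fin n → E) (ℓ : Fin n → Fin k) (i : Fin n) : ℝ :=
  if (cluster ℓ (ℓ i)).card = 1 then 0
  else (bScore X ℓ i - aScore X ℓ i) / max (aScore X ℓ i) (bScore X ℓ i)

/-- Average silhouette score `S̄(X; C₁,…,C_k)`. -/
def avgSilhouette [NormedAddCommGroup E] (X : Fin n → E) (ℓ : Fin n → Fin k) : ℝ :=
  (∑ i, silhouette X ℓ i) / (n : ℝ)

/-- Centroid `E(S)` of the points indexed by `S`. -/
def centroid [NormedAddCommGroup E] [NormedSpace ℝ E] (X : Fin n → E)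
    (S : Finset (Fin n)) : E :=
  ((S.card : ℝ))⁻¹ • ∑ i ∈ S, X i

/-- Numerator (between-cluster term) of the Calinski–Harabasz index. -/
def chNum [NormedAddCommGroup E] [NormedSpace ℝ E] (X : Fin n → E) (ℓ : Fin n → Fin k) : ℝ :=
  ((k : ℝ) - 1)⁻¹ *
    ∑ m : Fin k, ((cluster ℓ m).card : ℝ) *
      ‖centroid X (cluster ℓ m) - centroid X Finset.univ‖ ^ 2

/-- Denominator (within-cluster term) of the Calinski–Harabasz index. -/
def chDen [NormedAddCommGroup E] [NormedSpace ℝ E] (X : Fin n → E) (ℓ : Fin n → Fin k) : ℝ :=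
  ((n : ℝ) - (k : ℝ))⁻¹ *
    ∑ m : Fin k, ∑ i ∈ cluster ℓ m, ‖X i - centroid X (cluster ℓ m)‖ ^ 2

/-- Calinski–Harabasz index, valued in `[0,∞]`, with the conventions `CH = 1` when both
numerator and denominator vanish and `CH = ∞` when only the denominator vanishes. -/
def CHindex [NormedAddCommGroup E] [NormedSpace ℝ E] (X : Fin n → E) (ℓ : Fin n → Fin k) :
    EReal :=
  if chDen X ℓ = 0 then (if chNum X ℓ = 0 then 1 else ⊤)
  else ((chNum X ℓ / chDen X ℓ : ℝ) : EReal)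

/-- Minimum between-cluster distance (numerator of the Dunn index). -/
def diNum [NormedAddCommGroup E] (X : Fin n → E) (ℓ : Fin n → Fin k) : ℝ :=
  sInf {r : ℝ | ∃ i j : Fin n, ℓ i ≠ ℓ j ∧ r = ‖X i - X j‖}

/-- Maximum within-cluster distance (denominator of the Dunn index). -/
def diDen [NormedAddCommGroup E] (X : Fin n → E) (ℓ : Fin n → Fin k) : ℝ :=
  sSup {r : ℝ | ∃ i j : Fin n, ℓ i = ℓ j ∧ r = ‖X i - X j‖}

/-- Dunn index, valued in `[0,∞]`, with the conventions `DI = 1` when both numerator and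
denominator vanish and `DI = ∞` when only the denominator vanishes. -/
def DIindex [NormedAddCommGroup E] (X : Fin n → E) (ℓ : Fin n → Fin k) : EReal :=
  if diDen X ℓ = 0 then (if diNum X ℓ = 0 then 1 else ⊤)
  else ((diNum X ℓ / diDen X ℓ : ℝ) : EReal)

/-- `Y` is an `(α, Y i₀)`-outlier configuration: there is a hyperplane (with unit normal `v`)
separating `Y i₀` from the remaining points with margin width at least
`α · max{1, diam(Y ∖ {Y i₀})}`. -/
def IsOutlierConfig [NormedAddCommGroup F] [InnerProductSpace ℝ F] (Y : Fin n → F)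
    (i0 : Fin n) (α : ℝ) : Prop :=
  0 < α ∧ ∃ v : F, ‖v‖ = 1 ∧ ∀ i : Fin n, i ≠ i0 →
    α * max 1 (Metric.diam (Y '' {i : Fin n | i ≠ i0})) ≤ ⟪Y i - Y i0, v⟫

/-- The outlier number `α(Y, y₀)`: the largest `α` for which `Y` is an `(α, Y i₀)`-outlier
configuration (`0` if there is none). -/
def outlierNumber [NormedAddCommGroup F] [InnerProductSpace ℝ F] (Y : Fin n → F)
    (i0 : Fin n) : ℝ :=
  sSup {α : ℝ | IsOutlierConfig Y i0 α}


/-! ### Auxiliary machinery for the proof of `silhouette_impostor` -/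

private lemma exists_isometry_into {V : Type*} [NormedAddCommGroup V] [InnerProductSpace ℝ V]
    [FiniteDimensional ℝ V] {m : ℕ} (h : Module.finrank ℝ V ≤ m) :
    Nonempty (V →ₗᵢ[ℝ] EuclideanSpace ℝ (Fin m)) := by
  classical
  let b := stdOrthonormalBasis ℝ V
  let v : Fin (Module.finrank ℝ V) → EuclideanSpace ℝ (Fin m) :=
    fun i => EuclideanSpace.single (Fin.castLE h i) 1
  have hveq : v = (EuclideanSpace.basisFun (Fin m) ℝ) ∘ (Fin.castLE h) := by
    funext i
    simp [v, EuclideanSpace.basisFun_apply, Function.comp]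
  have hv : Orthonormal ℝ v := by
    rw [hveq]
    exact (EuclideanSpace.basisFun (Fin m) ℝ).orthonormal.comp _ (Fin.castLE_injective h)
  have hb : Orthonormal ℝ (⇑b.toBasis) := by
    rw [b.coe_toBasis]; exact b.orthonormal
  have hf : Orthonormal ℝ ((b.toBasis.constr ℝ v) ∘ ⇑b.toBasis) := by
    have heq : ((b.toBasis.constr ℝ v) ∘ ⇑b.toBasis) = v :=
      funext fun i => b.toBasis.constr_basis ℝ v i
    rw [heq]; exact hv
  exact ⟨(b.toBasis.constr ℝ v).isometryOfOrthonormal hb hf⟩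

private lemma exists_flatten {n : ℕ} (hn : 0 < n) {V : Type*} [NormedAddCommGroup V]
    [InnerProductSpace ℝ V] (Z : Fin n → V) :
    ∃ Y : Fin n → EuclideanSpace ℝ (Fin (n - 1)), ∀ i j, ‖Y i - Y j‖ = ‖Z i - Z j‖ := by
  classical
  set i0 : Fin n := ⟨0, hn⟩ with hi0
  set g : {i : Fin n // i ≠ i0} → V := fun i => Z i.1 - Z i0 with hg
  set W : Submodule ℝ V := Submodule.span ℝ (Set.range g) with hW
  haveI : FiniteDimensional ℝ W := FiniteDimensional.span_of_finite ℝ (Set.finite_range g)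
  have hr : Module.finrank ℝ W ≤ n - 1 := by
    have h1 : Module.finrank ℝ (Submodule.span ℝ (Set.range g)) ≤
        Fintype.card {i : Fin n // i ≠ i0} := finrank_range_le_card g
    have h2 : Fintype.card {i : Fin n // i ≠ i0} = n - 1 := by
      have := Fintype.card_subtype_compl (fun i : Fin n => i = i0)
      simpa [Fintype.card_subtype_eq, Fintype.card_fin] using this
    rw [← h2]
    exact h1
  obtain ⟨f⟩ := exists_isometry_into (V := W) hr
  have hmem : ∀ i, Z i - Z i0 ∈ W := by
    intro i
    by_cases hi : i = i0
    · rw [hi, sub_self]; exact W.zero_mem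
    · exact Submodule.subset_span ⟨⟨i, hi⟩, rfl⟩
  refine ⟨fun i => f ⟨Z i - Z i0, hmem i⟩, fun i j => ?_⟩
  rw [← f.map_sub, f.norm_map]
  have hcoe : ((⟨Z i - Z i0, hmem i⟩ - ⟨Z j - Z i0, hmem j⟩ : W) : V) = Z i - Z j := by
    rw [Submodule.coe_sub]
    simp [sub_sub_sub_cancel_right]
  calc ‖(⟨Z i - Z i0, hmem i⟩ - ⟨Z j - Z i0, hmem j⟩ : W)‖
      = ‖((⟨Z i - Z i0, hmem i⟩ - ⟨Z j - Z i0, hmem j⟩ : W) : V)‖ := rfl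
    _ = ‖Z i - Z j‖ := by rw [hcoe]

private lemma exists_shift {n : ℕ} (hn : 0 < n) (X : Fin n → EuclideanSpace ℝ (Fin (n - 1)))
    {t : ℝ} (ht : 0 ≤ t) :
    ∃ Y : Fin n → EuclideanSpace ℝ (Fin (n - 1)),
      ∀ i j, i ≠ j → ‖Y i - Y j‖ ^ 2 = ‖X i - X j‖ ^ 2 + t := by
  classical
  let s : ℝ := Real.sqrt (t / 2)
  let Z : Fin n → WithLp 2 ((EuclideanSpace ℝ (Fin (n - 1))) × (EuclideanSpace ℝ (Fin n))) :=
    fun i => (WithLp.equiv 2 _).symm (X i, s • EuclideanSpace.single i 1)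
  have hZ : ∀ i j, i ≠ j → ‖Z i - Z j‖ ^ 2 = ‖X i - X j‖ ^ 2 + t := by
    intro i j hij
    rw [WithLp.prod_norm_sq_eq_of_L2]
    have h1 : (Z i - Z j).fst = X i - X j := by
      simp [Z, WithLp.sub_fst]
    have h2 : (Z i - Z j).snd =
        s • ((EuclideanSpace.single i 1 : EuclideanSpace ℝ (Fin n)) -
          EuclideanSpace.single j 1) := by
      simp [Z, WithLp.sub_snd, smul_sub]
    rw [h1, h2]
    congr 1
    have hsing : ‖(EuclideanSpace.single i 1 : EuclideanSpace ℝ (Fin n)) -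
        EuclideanSpace.single j 1‖ ^ 2 = 2 := by
      rw [norm_sub_sq_real]
      rw [EuclideanSpace.inner_single_left]
      simp [EuclideanSpace.norm_single, EuclideanSpace.single_apply, Ne.symm hij, hij]
      norm_num
    rw [norm_smul, mul_pow, hsing]
    have hs2 : s ^ 2 = t / 2 := Real.sq_sqrt (by linarith)
    rw [Real.norm_eq_abs, sq_abs, hs2]
    ring
  obtain ⟨Y, hY⟩ := exists_flatten hn Z
  exact ⟨Y, fun i j hij => by rw [hY]; exact hZ i j hij⟩

private lemma norm_le_iff_of_shift {n : ℕ} {X Y : Fin n → EuclideanSpace ℝ (Fin (n - 1))}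
    {t : ℝ} (h : ∀ i j, i ≠ j → ‖Y i - Y j‖ ^ 2 = ‖X i - X j‖ ^ 2 + t)
    {i j l : Fin n} (hij : i ≠ j) (hil : i ≠ l) :
    ‖Y i - Y j‖ ≤ ‖Y i - Y l‖ ↔ ‖X i - X j‖ ≤ ‖X i - X l‖ := by
  rw [← pow_le_pow_iff_left₀ (norm_nonneg (Y i - Y j)) (norm_nonneg _) two_ne_zero,
    ← pow_le_pow_iff_left₀ (norm_nonneg (X i - X j)) (norm_nonneg _) two_ne_zero,
    h i j hij, h i l hil, add_le_add_iff_right]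

private lemma tsne_invariant {n : ℕ} {X Y : Fin n → EuclideanSpace ℝ (Fin (n - 1))} {t : ℝ}
    (h : ∀ i j, i ≠ j → ‖Y i - Y j‖ ^ 2 = ‖X i - X j‖ ^ 2 + t) (d : ℕ) (ρ : ℝ) :
    TSNE d ρ X = TSNE d ρ Y := by
  classical
  have hns : ∀ i, nearestSet Y i = nearestSet X i := by
    intro i
    unfold nearestSet
    apply Finset.filter_congr
    intro j hj
    rw [Finset.mem_erase] at hj
    refine forall₂_congr fun l hl => ?_
    rw [Finset.mem_erase] at hl
    exact norm_le_iff_of_shift h (Ne.symm hj.1) (Ne.symm hl.1)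
  have hc : ∀ (σ : ℝ) (i : Fin n), condAffinity Y σ i = condAffinity X σ i := by
    intro σ i
    funext j
    unfold condAffinity
    by_cases hji : j = i
    · simp [hji]
    · rw [if_neg hji, if_neg hji]
      by_cases hσ : σ = 0
      · rw [if_pos hσ, if_pos hσ, hns]
      · rw [if_neg hσ, if_neg hσ]
        have key : ∀ l : Fin n, l ≠ i →
            Real.exp (-‖Y i - Y l‖ ^ 2 / (2 * σ ^ 2)) =
              Real.exp (-t / (2 * σ ^ 2)) * Real.exp (-‖X i - X l‖ ^ 2 / (2 * σ ^ 2)) := by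
          intro l hl
          rw [← Real.exp_add]
          congr 1
          rw [h i l (Ne.symm hl)]
          ring
        rw [key j hji]
        have hden : ∑ l ∈ Finset.univ.erase i, Real.exp (-‖Y i - Y l‖ ^ 2 / (2 * σ ^ 2)) =
            Real.exp (-t / (2 * σ ^ 2)) *
              ∑ l ∈ Finset.univ.erase i, Real.exp (-‖X i - X l‖ ^ 2 / (2 * σ ^ 2)) := by
          rw [Finset.mul_sum]
          exact Finset.sum_congr rfl fun l hl => key l (Finset.mem_erase.mp hl).1
        rw [hden, mul_div_mul_left _ _ (Real.exp_ne_zero _)]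
  have hsig : ∀ (ρ' : ℝ) (i : Fin n), sigmaStar Y ρ' i = sigmaStar X ρ' i := by
    intro ρ' i
    unfold sigmaStar
    congr 1
    funext σ
    unfold IsCalibrated
    simp only [hc]
  have hin : inAffinity Y ρ = inAffinity X ρ := by
    funext i j
    unfold inAffinity
    simp only [hsig, hc]
  have hloss : tsneLoss (d := d) Y ρ = tsneLoss X ρ := by
    funext O
    unfold tsneLoss
    simp only [hin]
  unfold TSNE
  rw [hloss]

private def dmat {n : ℕ} (X : Fin n → EuclideanSpace ℝ (Fin (n - 1))) (t : ℝ)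
    (i j : Fin n) : ℝ :=
  if i = j then 0 else Real.sqrt (‖X i - X j‖ ^ 2 + t)

private def aG {n k : ℕ} (D : Fin n → Fin n → ℝ) (ℓ : Fin n → Fin k) (i : Fin n) : ℝ :=
  (∑ j ∈ cluster ℓ (ℓ i), D i j) / (((cluster ℓ (ℓ i)).card : ℝ) - 1)

private def bG {n k : ℕ} (D : Fin n → Fin n → ℝ) (ℓ : Fin n → Fin k) (i : Fin n) : ℝ :=
  sInf {r : ℝ | ∃ m : Fin k, m ≠ ℓ i ∧
    r = (∑ j ∈ cluster ℓ m, D i j) / ((cluster ℓ m).card : ℝ)}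

private def sG {n k : ℕ} (D : Fin n → Fin n → ℝ) (ℓ : Fin n → Fin k) (i : Fin n) : ℝ :=
  (bG D ℓ i - aG D ℓ i) / max (aG D ℓ i) (bG D ℓ i)

private lemma scores_eq {n k : ℕ} {X' : Fin n → EuclideanSpace ℝ (Fin (n - 1))}
    {D : Fin n → Fin n → ℝ} (hD : ∀ i j, ‖X' i - X' j‖ = D i j) (ℓ : Fin n → Fin k) :
    (∀ i, aScore X' ℓ i = aG D ℓ i) ∧ (∀ i, bScore X' ℓ i = bG D ℓ i) := by
  have hsum : ∀ (i : Fin n) (m : Fin k),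
      ∑ j ∈ cluster ℓ m, ‖X' i - X' j‖ = ∑ j ∈ cluster ℓ m, D i j :=
    fun i m => Finset.sum_congr rfl fun j _ => hD i j
  constructor
  · intro i
    unfold aScore aG
    rw [hsum]
  · intro i
    unfold bScore bG
    simp only [hsum]

private lemma avgSilhouette_eq {n k : ℕ} {X' : Fin n → EuclideanSpace ℝ (Fin (n - 1))}
    {D : Fin n → Fin n → ℝ} (hD : ∀ i j, ‖X' i - X' j‖ = D i j) (ℓ : Fin n → Fin k)
    (hcard : ∀ m : Fin k, 1 < (cluster ℓ m).card) :
    avgSilhouette X' ℓ = (∑ i, sG D ℓ i) / (n : ℝ) := by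
  obtain ⟨ha, hb⟩ := scores_eq hD ℓ
  unfold avgSilhouette
  congr 1
  refine Finset.sum_congr rfl fun i _ => ?_
  unfold silhouette sG
  rw [if_neg (by have := hcard (ℓ i); omega), ha, hb]

private lemma dmat_bounds {n : ℕ} (X : Fin n → EuclideanSpace ℝ (Fin (n - 1))) {t : ℝ}
    (ht : 0 ≤ t) {M : ℝ} (hM : ∀ i j, ‖X i - X j‖ ≤ M) {i j : Fin n} (hij : i ≠ j) :
    Real.sqrt t ≤ dmat X t i j ∧ dmat X t i j ≤ Real.sqrt t + M := by
  unfold dmat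
  rw [if_neg hij]
  constructor
  · exact Real.sqrt_le_sqrt (by nlinarith [sq_nonneg ‖X i - X j‖])
  · have h1 : ‖X i - X j‖ ^ 2 + t ≤ (‖X i - X j‖ + Real.sqrt t) ^ 2 := by
      have h2 := Real.sq_sqrt ht
      nlinarith [Real.sqrt_nonneg t, norm_nonneg (X i - X j)]
    calc Real.sqrt (‖X i - X j‖ ^ 2 + t)
        ≤ Real.sqrt ((‖X i - X j‖ + Real.sqrt t) ^ 2) := Real.sqrt_le_sqrt h1
      _ = ‖X i - X j‖ + Real.sqrt t := Real.sqrt_sq (by positivity)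
      _ ≤ Real.sqrt t + M := by have := hM i j; linarith

private lemma aG_bounds {n k : ℕ} {ℓ : Fin n → Fin k} (hcard : ∀ m, 1 < (cluster ℓ m).card)
    {D : Fin n → Fin n → ℝ} {s M : ℝ}
    (hlo : ∀ i j, i ≠ j → s ≤ D i j ∧ D i j ≤ s + M) (hdiag : ∀ i, D i i = 0) (i : Fin n) :
    s ≤ aG D ℓ i ∧ aG D ℓ i ≤ s + M := by
  classical
  have hi : i ∈ cluster ℓ (ℓ i) := by simp [cluster]
  have hc1 : 1 < (cluster ℓ (ℓ i)).card := hcard (ℓ i)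
  have hcR : (0 : ℝ) < ((cluster ℓ (ℓ i)).card : ℝ) - 1 := by
    have : (2 : ℝ) ≤ ((cluster ℓ (ℓ i)).card : ℝ) := by exact_mod_cast hc1
    linarith
  have hsum : ∑ j ∈ cluster ℓ (ℓ i), D i j = ∑ j ∈ (cluster ℓ (ℓ i)).erase i, D i j :=
    (Finset.sum_erase _ (hdiag i)).symm
  have hcast : (((cluster ℓ (ℓ i)).erase i).card : ℝ) = ((cluster ℓ (ℓ i)).card : ℝ) - 1 := by
    rw [Finset.card_erase_of_mem hi]
    have h1 : 1 ≤ (cluster ℓ (ℓ i)).card := hc1.le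
    push_cast [h1]
    ring
  have hlow : (((cluster ℓ (ℓ i)).erase i).card : ℝ) * s ≤
      ∑ j ∈ (cluster ℓ (ℓ i)).erase i, D i j := by
    have := Finset.card_nsmul_le_sum ((cluster ℓ (ℓ i)).erase i) (fun j => D i j) s
      (fun j hj => (hlo i j (Ne.symm (Finset.mem_erase.mp hj).1)).1)
    rwa [nsmul_eq_mul] at this
  have hhigh : ∑ j ∈ (cluster ℓ (ℓ i)).erase i, D i j ≤
      (((cluster ℓ (ℓ i)).erase i).card : ℝ) * (s + M) := by
    have := Finset.sum_le_card_nsmul ((cluster ℓ (ℓ i)).erase i) (fun j => D i j) (s + M)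
      (fun j hj => (hlo i j (Ne.symm (Finset.mem_erase.mp hj).1)).2)
    rwa [nsmul_eq_mul] at this
  unfold aG
  rw [hsum]
  constructor
  · rw [le_div_iff₀ hcR, ← hcast]
    calc s * (((cluster ℓ (ℓ i)).erase i).card : ℝ)
        = (((cluster ℓ (ℓ i)).erase i).card : ℝ) * s := mul_comm _ _
      _ ≤ _ := hlow
  · rw [div_le_iff₀ hcR, ← hcast]
    calc ∑ j ∈ (cluster ℓ (ℓ i)).erase i, D i j
        ≤ (((cluster ℓ (ℓ i)).erase i).card : ℝ) * (s + M) := hhigh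
      _ = (s + M) * (((cluster ℓ (ℓ i)).erase i).card : ℝ) := mul_comm _ _

private lemma bG_bounds {n k : ℕ} (hk : 1 < k) {ℓ : Fin n → Fin k}
    (hcard : ∀ m, 1 < (cluster ℓ m).card) {D : Fin n → Fin n → ℝ} {s M : ℝ}
    (hlo : ∀ i j, i ≠ j → s ≤ D i j ∧ D i j ≤ s + M) (i : Fin n) :
    s ≤ bG D ℓ i ∧ bG D ℓ i ≤ s + M := by
  classical
  obtain ⟨m0, hm0⟩ := Fintype.exists_ne_of_one_lt_card (by simpa using hk) (ℓ i)
  have helem : ∀ m : Fin k, m ≠ ℓ i →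
      s ≤ (∑ j ∈ cluster ℓ m, D i j) / ((cluster ℓ m).card : ℝ) ∧
        (∑ j ∈ cluster ℓ m, D i j) / ((cluster ℓ m).card : ℝ) ≤ s + M := by
    intro m hm
    have hij : ∀ j ∈ cluster ℓ m, i ≠ j := by
      intro j hj e
      rw [cluster, Finset.mem_filter] at hj
      exact hm (by rw [← hj.2, ← e])
    have hcpos : (0 : ℝ) < ((cluster ℓ m).card : ℝ) := by
      have := hcard m
      exact_mod_cast (by omega : 0 < (cluster ℓ m).card)
    constructor
    · rw [le_div_iff₀' hcpos]
      have := Finset.card_nsmul_le_sum (cluster ℓ m) (fun j => D i j) s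
        (fun j hj => (hlo i j (hij j hj)).1)
      rwa [nsmul_eq_mul] at this
    · rw [div_le_iff₀' hcpos]
      have := Finset.sum_le_card_nsmul (cluster ℓ m) (fun j => D i j) (s + M)
        (fun j hj => (hlo i j (hij j hj)).2)
      rwa [nsmul_eq_mul] at this
  unfold bG
  constructor
  · refine le_csInf ⟨_, ⟨m0, hm0, rfl⟩⟩ ?_
    rintro r ⟨m, hm, rfl⟩
    exact (helem m hm).1
  · refine le_trans (csInf_le ⟨s, ?_⟩ ⟨m0, hm0, rfl⟩) (helem m0 hm0).2
    rintro r ⟨m, hm, rfl⟩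
    exact (helem m hm).1

private lemma bG_eq_inf' {n k : ℕ} (D : Fin n → Fin n → ℝ) (ℓ : Fin n → Fin k) (i : Fin n)
    (hne : (Finset.univ.erase (ℓ i)).Nonempty) :
    bG D ℓ i = (Finset.univ.erase (ℓ i)).inf' hne
      (fun m => (∑ j ∈ cluster ℓ m, D i j) / ((cluster ℓ m).card : ℝ)) := by
  rw [Finset.inf'_eq_csInf_image]
  unfold bG
  congr 1
  ext r
  simp only [Set.mem_setOf_eq, Set.mem_image, Finset.coe_erase, Finset.coe_univ,
    Set.mem_diff, Set.mem_singleton_iff, Set.mem_univ, true_and]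
  constructor
  · rintro ⟨m, hm, rfl⟩
    exact ⟨m, hm, rfl⟩
  · rintro ⟨m, hm, rfl⟩
    exact ⟨m, hm, rfl⟩

private lemma cont_dmat {n : ℕ} (X : Fin n → EuclideanSpace ℝ (Fin (n - 1))) (i j : Fin n) :
    Continuous fun t : ℝ => dmat X t i j := by
  unfold dmat
  by_cases hij : i = j
  · simp only [hij, if_true]
    exact continuous_const
  · simp only [hij, if_false]
    exact Real.continuous_sqrt.comp (continuous_const.add continuous_id)

private lemma contOn_g {n k : ℕ} (hk : 1 < k) (X : Fin n → EuclideanSpace ℝ (Fin (n - 1)))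
    (ℓ : Fin n → Fin k) {s : Set ℝ}
    (hmax : ∀ t ∈ s, ∀ i, max (aG (dmat X t) ℓ i) (bG (dmat X t) ℓ i) ≠ 0) :
    ContinuousOn (fun t => (∑ i, sG (dmat X t) ℓ i) / (n : ℝ)) s := by
  apply ContinuousOn.div_const
  apply continuousOn_finset_sum
  intro i _
  have hA : Continuous fun t => aG (dmat X t) ℓ i := by
    unfold aG
    exact (continuous_finset_sum _ fun j _ => cont_dmat X i j).div_const _
  have hne : (Finset.univ.erase (ℓ i)).Nonempty := by
    rw [← Finset.card_pos, Finset.card_erase_of_mem (Finset.mem_univ _), Finset.card_univ,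
      Fintype.card_fin]
    omega
  have hB : Continuous fun t => bG (dmat X t) ℓ i := by
    have heq : (fun t => bG (dmat X t) ℓ i) = fun t => (Finset.univ.erase (ℓ i)).inf' hne
        (fun m => (∑ j ∈ cluster ℓ m, dmat X t i j) / ((cluster ℓ m).card : ℝ)) := by
      funext t
      exact bG_eq_inf' _ ℓ i hne
    rw [heq]
    apply Continuous.finset_inf'_apply
      (f := fun m t => (∑ j ∈ cluster ℓ m, dmat X t i j) / ((cluster ℓ m).card : ℝ)) hne
    intro m _
    exact (continuous_finset_sum _ fun j _ => cont_dmat X i j).div_const _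
  unfold sG
  exact ((hB.sub hA).continuousOn).div ((hA.max hB).continuousOn) fun t ht => hmax t ht i


/-- Theorem `unclustHammer`: any stationary t-SNE output can be produced by
an arbitrarily unclustered (in average silhouette score) input. -/
theorem silhouette_impostor (n k d : ℕ) (hk : 1 < k) (hkn : k < n) (hd : 1 ≤ d)
    (X : Fin n → EuclideanSpace ℝ (Fin (n - 1)))
    (ℓ : Fin n → Fin k)
    (hcard : ∀ m : Fin k, 1 < (cluster ℓ m).card)
    (hwd : ∀ i : Fin n, max (aScore X ℓ i) (bScore X ℓ i) ≠ 0) :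
    ∀ ε : ℝ, 0 < ε → ε ≤ 1 →
      ∃ Xε : Fin n → EuclideanSpace ℝ (Fin (n - 1)),
        avgSilhouette Xε ℓ = ε * avgSilhouette X ℓ ∧
        ∀ ρ : ℝ, 1 < ρ → ρ < (n : ℝ) - 1 → TSNE d ρ X = TSNE d ρ Xε := by
  classical
  intro ε hε hε1
  have hn0 : 0 < n := by omega
  by_cases hS0 : avgSilhouette X ℓ = 0
  · exact ⟨X, by rw [hS0, mul_zero], fun ρ _ _ => rfl⟩
  -- a uniform bound on pairwise distances
  set M : ℝ := ∑ i : Fin n, ∑ j : Fin n, ‖X i - X j‖ with hMdef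
  have hM : ∀ i j, ‖X i - X j‖ ≤ M := by
    intro i j
    have h1 : ‖X i - X j‖ ≤ ∑ j' : Fin n, ‖X i - X j'‖ :=
      Finset.single_le_sum (f := fun j' => ‖X i - X j'‖)
        (fun j' _ => norm_nonneg _) (Finset.mem_univ j)
    have h2 : ∑ j' : Fin n, ‖X i - X j'‖ ≤ M :=
      Finset.single_le_sum (f := fun i' => ∑ j' : Fin n, ‖X i' - X j'‖)
        (fun i' _ => Finset.sum_nonneg fun j' _ => norm_nonneg _) (Finset.mem_univ i)
    linarith
  have hM0 : 0 ≤ M := le_trans (norm_nonneg (X ⟨0, hn0⟩ - X ⟨0, hn0⟩)) (hM ⟨0, hn0⟩ ⟨0, hn0⟩)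
  -- the distance matrix at t = 0 is the one of X
  have hd0 : ∀ i j, ‖X i - X j‖ = dmat X 0 i j := by
    intro i j
    unfold dmat
    by_cases hij : i = j
    · simp [hij]
    · rw [if_neg hij, add_zero, Real.sqrt_sq (norm_nonneg _)]
  set g : ℝ → ℝ := fun t => (∑ i, sG (dmat X t) ℓ i) / (n : ℝ) with hgdef
  have hg0 : g 0 = avgSilhouette X ℓ := (avgSilhouette_eq hd0 ℓ hcard).symm
  have hdiag : ∀ t : ℝ, ∀ i, dmat X t i i = 0 := by
    intro t i
    unfold dmat
    simp
  -- quantitative bound on |g t| for t > 0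
  have hgbound : ∀ t : ℝ, 0 < t → |g t| ≤ M / Real.sqrt t := by
    intro t ht
    have hlo : ∀ i j, i ≠ j →
        Real.sqrt t ≤ dmat X t i j ∧ dmat X t i j ≤ Real.sqrt t + M :=
      fun i j hij => dmat_bounds X ht.le hM hij
    have hs : 0 < Real.sqrt t := Real.sqrt_pos.mpr ht
    have hsil : ∀ i, |sG (dmat X t) ℓ i| ≤ M / Real.sqrt t := by
      intro i
      obtain ⟨ha1, ha2⟩ := aG_bounds hcard hlo (hdiag t) i
      obtain ⟨hb1, hb2⟩ := bG_bounds hk hcard hlo i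
      unfold sG
      rw [abs_div]
      have hmaxpos : 0 < max (aG (dmat X t) ℓ i) (bG (dmat X t) ℓ i) :=
        lt_of_lt_of_le hs (le_trans ha1 (le_max_left _ _))
      rw [abs_of_pos hmaxpos]
      apply div_le_div₀ hM0 _ hs (le_trans ha1 (le_max_left _ _))
      rw [abs_le]
      constructor <;> linarith
    have h1 : |∑ i, sG (dmat X t) ℓ i| ≤ (n : ℝ) * (M / Real.sqrt t) := by
      calc |∑ i, sG (dmat X t) ℓ i| ≤ ∑ i, |sG (dmat X t) ℓ i| :=
            Finset.abs_sum_le_sum_abs _ _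
        _ ≤ ∑ _i : Fin n, M / Real.sqrt t := Finset.sum_le_sum fun i _ => hsil i
        _ = (n : ℝ) * (M / Real.sqrt t) := by
            rw [Finset.sum_const, Finset.card_univ, Fintype.card_fin, nsmul_eq_mul]
    have hnR : (0 : ℝ) < (n : ℝ) := by exact_mod_cast hn0
    show |(∑ i, sG (dmat X t) ℓ i) / (n : ℝ)| ≤ M / Real.sqrt t
    rw [abs_div, abs_of_pos hnR, div_le_iff₀ hnR]
    calc |∑ i, sG (dmat X t) ℓ i| ≤ (n : ℝ) * (M / Real.sqrt t) := h1
      _ = M / Real.sqrt t * (n : ℝ) := mul_comm _ _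
  -- the denominators never vanish for t ≥ 0
  have hmax : ∀ t : ℝ, 0 ≤ t → ∀ i,
      max (aG (dmat X t) ℓ i) (bG (dmat X t) ℓ i) ≠ 0 := by
    intro t ht i
    rcases eq_or_lt_of_le ht with h0t | h0t
    · obtain ⟨ha, hb⟩ := scores_eq hd0 ℓ
      rw [← h0t, ← ha i, ← hb i]
      exact hwd i
    · have hlo : ∀ i' j', i' ≠ j' →
          Real.sqrt t ≤ dmat X t i' j' ∧ dmat X t i' j' ≤ Real.sqrt t + M :=
        fun i' j' hij => dmat_bounds X ht hM hij
      have hs : 0 < Real.sqrt t := Real.sqrt_pos.mpr h0t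
      have ha1 := (aG_bounds hcard hlo (hdiag t) i).1
      exact ne_of_gt (lt_of_lt_of_le (lt_of_lt_of_le hs ha1) (le_max_left _ _))
  -- the target value
  set τ : ℝ := ε * avgSilhouette X ℓ with hτdef
  have hτ0 : τ ≠ 0 := mul_ne_zero (ne_of_gt hε) hS0
  have hτabs : 0 < |τ| := abs_pos.mpr hτ0
  set T : ℝ := (M / |τ|) ^ 2 + 1 with hTdef
  have hT0 : 0 < T := by positivity
  have hgT : |g T| < |τ| := by
    have h1 := hgbound T hT0
    have hsT : M / |τ| < Real.sqrt T := Real.lt_sqrt_of_sq_lt (by rw [hTdef]; linarith)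
    have hsTpos : 0 < Real.sqrt T := Real.sqrt_pos.mpr hT0
    have h2 : M / Real.sqrt T < |τ| := by
      rw [div_lt_iff₀ hsTpos]
      have h3 := (div_lt_iff₀ hτabs).mp hsT
      linarith [h3]
    linarith
  have hcont : ContinuousOn g (Set.Icc 0 T) :=
    contOn_g hk X ℓ fun t ht => hmax t ht.1
  -- given t with g t = τ, produce the witness
  have final : ∀ t : ℝ, 0 ≤ t → g t = τ →
      ∃ Xε : Fin n → EuclideanSpace ℝ (Fin (n - 1)),
        avgSilhouette Xε ℓ = ε * avgSilhouette X ℓ ∧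
        ∀ ρ : ℝ, 1 < ρ → ρ < (n : ℝ) - 1 → TSNE d ρ X = TSNE d ρ Xε := by
    intro t ht hgt
    obtain ⟨Y, hY⟩ := exists_shift hn0 X ht
    have hdist : ∀ i j, ‖Y i - Y j‖ = dmat X t i j := by
      intro i j
      unfold dmat
      by_cases hij : i = j
      · simp [hij]
      · rw [if_neg hij, ← hY i j hij, Real.sqrt_sq (norm_nonneg _)]
    refine ⟨Y, ?_, fun ρ _ _ => tsne_invariant hY d ρ⟩
    rw [avgSilhouette_eq hdist ℓ hcard]
    exact hgt
  -- intermediate value argument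
  rcases lt_or_gt_of_ne hS0 with hneg | hpos
  · have hτneg : τ < 0 := mul_neg_of_pos_of_neg hε hneg
    have h1 : g 0 ≤ τ := by
      rw [hg0, hτdef]
      nlinarith
    have h2 : τ ≤ g T := by
      have h3 := neg_abs_le (g T)
      have h4 : |τ| = -τ := abs_of_neg hτneg
      linarith
    obtain ⟨t, htmem, htval⟩ := intermediate_value_Icc hT0.le hcont ⟨h1, h2⟩
    exact final t htmem.1 htval
  · have hτpos : 0 < τ := mul_pos hε hpos
    have h1 : τ ≤ g 0 := by
      rw [hg0, hτdef]
      nlinarith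
    have h2 : g T ≤ τ := by
      have h3 := le_abs_self (g T)
      have h4 : |τ| = τ := abs_of_pos hτpos
      linarith
    obtain ⟨t, htmem, htval⟩ := intermediate_value_Icc' hT0.le hcont ⟨h2, h1⟩
    exact final t htmem.1 htval


end TSNEPaper
end
end

section
/- Fix n > 2 and perplexity ρ ∈ (1, n−1). Let Y = {y_0, y_1,…,y_{n−1}} ∈ IM_ρ be a stationary t-SNE embedding, with y_0 the designated outlier point. Then for every n-point input X = {x_0, x_1,…,x_{n−1}} ⊂ ℝ^{n−1} such that Y ∈ TSNE_ρ(X), the outlier number of Y with respect to y_0 satisfies α(Y, y_0) ≤ √( 1 + (1 + 2/(n−2)) · ( 8 / (1 + Σ_{i=1}^{n−1} P_{0|i}(X)) ) ), where P_{0|i}(X) is the conditional input affinity of point i toward point 0 at its perplexity-calibrated bandwidth σ_i*. -/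
open scoped BigOperators RealInnerProductSpace
noncomputable section

namespace TSNEPaper

variable {n k : ℕ} {E F : Type*}

lemma condAffinity_nonneg [NormedAddCommGroup E] (X : Fin n → E) (σ : ℝ) (i j : Fin n) :
    0 ≤ condAffinity X σ i j := by
  unfold condAffinity
  split_ifs with h1 h2 h3
  · exact le_refl 0
  · positivity
  · exact le_refl 0
  · have hs : 0 < ∑ l ∈ Finset.univ.erase i, Real.exp (-‖X i - X l‖ ^ 2 / (2 * σ ^ 2)) := by
      apply Finset.sum_pos (fun l _ => Real.exp_pos _)
      exact ⟨j, Finset.mem_erase.2 ⟨h1, Finset.mem_univ j⟩⟩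
    exact div_nonneg (Real.exp_pos _).le hs.le

lemma sum_condAffinity [NormedAddCommGroup E] (hn : 2 ≤ n) (X : Fin n → E) (σ : ℝ) (i : Fin n) :
    ∑ j ∈ Finset.univ.erase i, condAffinity X σ i j = 1 := by
  have herase : (Finset.univ.erase i).Nonempty := by
    rw [← Finset.card_pos, Finset.card_erase_of_mem (Finset.mem_univ i), Finset.card_univ,
      Fintype.card_fin]
    omega
  by_cases hσ : σ = 0
  · have hns : (nearestSet X i).Nonempty := by
      obtain ⟨j0, hj0, hmin⟩ := Finset.exists_min_image (Finset.univ.erase i)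
        (fun j => ‖X i - X j‖) herase
      exact ⟨j0, Finset.mem_filter.2 ⟨hj0, hmin⟩⟩
    have hsub : nearestSet X i ⊆ Finset.univ.erase i := Finset.filter_subset _ _
    have hcard : (0:ℝ) < (nearestSet X i).card := by
      exact_mod_cast Finset.card_pos.2 hns
    calc ∑ j ∈ Finset.univ.erase i, condAffinity X σ i j
        = ∑ j ∈ Finset.univ.erase i,
            (if j ∈ nearestSet X i then ((nearestSet X i).card : ℝ)⁻¹ else 0) := by
          apply Finset.sum_congr rfl
          intro j hj
          rw [condAffinity, if_neg (Finset.ne_of_mem_erase hj), if_pos hσ]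
      _ = ∑ j ∈ nearestSet X i, ((nearestSet X i).card : ℝ)⁻¹ := by
          rw [Finset.sum_ite_mem, Finset.inter_eq_right.2 hsub]
      _ = 1 := by
          rw [Finset.sum_const, nsmul_eq_mul]
          field_simp
  · have hpos : 0 < ∑ l ∈ Finset.univ.erase i,
        Real.exp (-‖X i - X l‖ ^ 2 / (2 * σ ^ 2)) :=
      Finset.sum_pos (fun l _ => Real.exp_pos _) herase
    calc ∑ j ∈ Finset.univ.erase i, condAffinity X σ i j
        = (∑ j ∈ Finset.univ.erase i, Real.exp (-‖X i - X j‖ ^ 2 / (2 * σ ^ 2))) /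
          (∑ l ∈ Finset.univ.erase i, Real.exp (-‖X i - X l‖ ^ 2 / (2 * σ ^ 2))) := by
          rw [Finset.sum_div]
          apply Finset.sum_congr rfl
          intro j hj
          rw [condAffinity, if_neg (Finset.ne_of_mem_erase hj), if_neg hσ]
      _ = 1 := div_self (ne_of_gt hpos)

lemma inAffinity_nonneg [NormedAddCommGroup E] (X : Fin n → E) (ρ : ℝ) (i j : Fin n) :
    0 ≤ inAffinity X ρ i j := by
  unfold inAffinity
  split_ifs with h
  · exact le_refl 0
  · have := condAffinity_nonneg X (sigmaStar X ρ j) j i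
    have := condAffinity_nonneg X (sigmaStar X ρ i) i j
    positivity

lemma inAffinity_symm [NormedAddCommGroup E] (X : Fin n → E) (ρ : ℝ) (i j : Fin n) :
    inAffinity X ρ i j = inAffinity X ρ j i := by
  unfold inAffinity
  rcases eq_or_ne i j with h | h
  · simp [h]
  · rw [if_neg h, if_neg (Ne.symm h), add_comm]

lemma inAffinity_self [NormedAddCommGroup E] (X : Fin n → E) (ρ : ℝ) (i : Fin n) :
    inAffinity X ρ i i = 0 := by simp [inAffinity]

lemma sum_inAffinity_erase [NormedAddCommGroup E] (hn : 2 ≤ n) (X : Fin n → E) (ρ : ℝ)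
    (i0 : Fin n) :
    ∑ j ∈ Finset.univ.erase i0, inAffinity X ρ i0 j =
      (1 + ∑ j ∈ Finset.univ.erase i0, condAffinity X (sigmaStar X ρ j) j i0) / (2 * n) := by
  have : ∀ j ∈ Finset.univ.erase i0, inAffinity X ρ i0 j =
      (condAffinity X (sigmaStar X ρ j) j i0 + condAffinity X (sigmaStar X ρ i0) i0 j) /
        (2 * n) := by
    intro j hj
    rw [inAffinity, if_neg (Finset.ne_of_mem_erase hj).symm]
  rw [Finset.sum_congr rfl this, ← Finset.sum_div, Finset.sum_add_distrib,
    sum_condAffinity hn X _ i0, add_comm]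

/-- Splitting a sum over the off-diagonal into the two slices through `i0`, when the summand
vanishes away from those slices. -/
lemma sum_offDiag_split (i0 : Fin n) (h : Fin n × Fin n → ℝ)
    (hzero : ∀ p ∈ (Finset.univ : Finset (Fin n)).offDiag, p.1 ≠ i0 → p.2 ≠ i0 → h p = 0) :
    ∑ p ∈ (Finset.univ : Finset (Fin n)).offDiag, h p =
      ∑ j ∈ Finset.univ.erase i0, (h (i0, j) + h (j, i0)) := by
  classical
  set A := (Finset.univ.erase i0).image (fun j => ((i0, j) : Fin n × Fin n)) with hA
  set B := (Finset.univ.erase i0).image (fun j => ((j, i0) : Fin n × Fin n)) with hB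
  have hsubA : A ⊆ (Finset.univ : Finset (Fin n)).offDiag := by
    intro p hp
    obtain ⟨j, hj, rfl⟩ := Finset.mem_image.1 hp
    exact Finset.mem_offDiag.2 ⟨Finset.mem_univ _, Finset.mem_univ _,
      (Finset.ne_of_mem_erase hj).symm⟩
  have hsubB : B ⊆ (Finset.univ : Finset (Fin n)).offDiag := by
    intro p hp
    obtain ⟨j, hj, rfl⟩ := Finset.mem_image.1 hp
    exact Finset.mem_offDiag.2 ⟨Finset.mem_univ _, Finset.mem_univ _,
      Finset.ne_of_mem_erase hj⟩
  have hdisj : Disjoint A B := by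
    rw [Finset.disjoint_left]
    intro p hpA hpB
    obtain ⟨j, hj, rfl⟩ := Finset.mem_image.1 hpA
    obtain ⟨j', hj', hj'eq⟩ := Finset.mem_image.1 hpB
    have : j' = i0 := congrArg Prod.fst hj'eq
    exact Finset.ne_of_mem_erase hj' this
  have hsub : A ∪ B ⊆ (Finset.univ : Finset (Fin n)).offDiag :=
    Finset.union_subset hsubA hsubB
  rw [← Finset.sum_subset hsub]
  · rw [Finset.sum_union hdisj, Finset.sum_image (by intro a _ b _ hab; exact (Prod.mk.injEq _ _ _ _ ▸ hab).2),
      Finset.sum_image (by intro a _ b _ hab; exact (Prod.mk.injEq _ _ _ _ ▸ hab).1),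
      ← Finset.sum_add_distrib]
  · intro p hp hpnot
    apply hzero p hp
    · intro h1
      apply hpnot
      apply Finset.mem_union_left
      exact Finset.mem_image.2 ⟨p.2, Finset.mem_erase.2 ⟨by
        have := (Finset.mem_offDiag.1 hp).2.2; rw [h1] at this; exact this.symm,
        Finset.mem_univ _⟩, by rw [← h1]⟩
    · intro h2
      apply hpnot
      apply Finset.mem_union_right
      exact Finset.mem_image.2 ⟨p.1, Finset.mem_erase.2 ⟨by
        have := (Finset.mem_offDiag.1 hp).2.2; rw [h2] at this; exact this,
        Finset.mem_univ _⟩, by rw [← h2]⟩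

lemma sum_offDiag_eq_double (f : Fin n → Fin n → ℝ) (hdiag : ∀ i, f i i = 0) :
    ∑ p ∈ (Finset.univ : Finset (Fin n)).offDiag, f p.1 p.2 = ∑ i, ∑ j, f i j := by
  rw [show (Finset.univ : Finset (Fin n)).offDiag = (Finset.univ ×ˢ Finset.univ).filter (fun a : Fin n × Fin n => a.1 ≠ a.2) from by ext; simp, Finset.sum_filter_of_ne (fun x _ hx => by
    intro heq
    apply hx
    have : x = (x.1, x.2) := rfl
    rw [this, ← heq, hdiag]), Finset.sum_product]

lemma total_inAffinity [NormedAddCommGroup E] (hn : 2 ≤ n) (X : Fin n → E) (ρ : ℝ) :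
    ∑ p ∈ (Finset.univ : Finset (Fin n)).offDiag, inAffinity X ρ p.1 p.2 = 1 := by
  have h2n : (0:ℝ) < 2 * n := by positivity
  rw [sum_offDiag_eq_double _ (fun i => inAffinity_self X ρ i)]
  have hrow : ∀ i : Fin n, ∑ j, inAffinity X ρ i j =
      (1 + ∑ j ∈ Finset.univ.erase i, condAffinity X (sigmaStar X ρ j) j i) / (2 * n) := by
    intro i
    rw [← Finset.add_sum_erase _ _ (Finset.mem_univ i), inAffinity_self, zero_add,
      sum_inAffinity_erase hn X ρ i]
  -- swap the double sum over conditional affinities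
  have hswap : ∑ i, ∑ j ∈ Finset.univ.erase i, condAffinity X (sigmaStar X ρ j) j i
      = ∑ j, ∑ i ∈ Finset.univ.erase j, condAffinity X (sigmaStar X ρ j) j i := by
    have h1 : ∀ i : Fin n, ∑ j ∈ Finset.univ.erase i, condAffinity X (sigmaStar X ρ j) j i
        = ∑ j, if j ≠ i then condAffinity X (sigmaStar X ρ j) j i else 0 := by
      intro i
      rw [← Finset.filter_ne' Finset.univ i, Finset.sum_filter]
    have h2 : ∀ j : Fin n, ∑ i ∈ Finset.univ.erase j, condAffinity X (sigmaStar X ρ j) j i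
        = ∑ i, if i ≠ j then condAffinity X (sigmaStar X ρ j) j i else 0 := by
      intro j
      rw [← Finset.filter_ne' Finset.univ j, Finset.sum_filter]
    simp only [h1, h2]
    rw [Finset.sum_comm]
    exact Finset.sum_congr rfl fun y _ => Finset.sum_congr rfl fun x _ => if_congr ne_comm rfl rfl
  have hthis : ∀ j : Fin n, ∑ i ∈ Finset.univ.erase j, condAffinity X (sigmaStar X ρ j) j i = 1 :=
    fun j => sum_condAffinity hn X _ j
  rw [Finset.sum_congr rfl (fun i _ => hrow i), ← Finset.sum_div, Finset.sum_add_distrib, hswap,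
    Finset.sum_congr rfl (fun j _ => hthis j)]
  simp only [Finset.sum_const, Finset.card_univ, Fintype.card_fin, nsmul_eq_mul, mul_one]
  have hn0 : (n:ℝ) ≠ 0 := by positivity
  field_simp
  ring

lemma offDiag_nonempty (hn : 2 ≤ n) : (Finset.univ : Finset (Fin n)).offDiag.Nonempty := by
  obtain ⟨i, j, hij⟩ := Fintype.exists_pair_of_one_lt_card (α := Fin n) (by rw [Fintype.card_fin]; omega)
  exact ⟨(i, j), Finset.mem_offDiag.2 ⟨Finset.mem_univ _, Finset.mem_univ _, hij⟩⟩

lemma qSum_pos {d : ℕ} (hn : 2 ≤ n) (Z : Fin n → EuclideanSpace ℝ (Fin d)) :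
    0 < ∑ p ∈ (Finset.univ : Finset (Fin n)).offDiag, (1 + ‖Z p.1 - Z p.2‖ ^ 2)⁻¹ :=
  Finset.sum_pos (fun p _ => by positivity) (offDiag_nonempty hn)

lemma tsneLoss_eq {d : ℕ} [NormedAddCommGroup E] (hn : 2 ≤ n) (X : Fin n → E) (ρ : ℝ)
    (Z : Fin n → EuclideanSpace ℝ (Fin d)) :
    tsneLoss X ρ Z =
      (∑ p ∈ (Finset.univ : Finset (Fin n)).offDiag,
        inAffinity X ρ p.1 p.2 * Real.log (inAffinity X ρ p.1 p.2)) +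
      ((∑ p ∈ (Finset.univ : Finset (Fin n)).offDiag,
        inAffinity X ρ p.1 p.2 * Real.log (1 + ‖Z p.1 - Z p.2‖ ^ 2)) +
      Real.log (∑ p ∈ (Finset.univ : Finset (Fin n)).offDiag, (1 + ‖Z p.1 - Z p.2‖ ^ 2)⁻¹)) := by
  set S : ℝ := ∑ p ∈ (Finset.univ : Finset (Fin n)).offDiag, (1 + ‖Z p.1 - Z p.2‖ ^ 2)⁻¹ with hS
  have hSpos : 0 < S := qSum_pos hn Z
  have hlogS : Real.log S = ∑ p ∈ (Finset.univ : Finset (Fin n)).offDiag,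
      inAffinity X ρ p.1 p.2 * Real.log S := by
    rw [← Finset.sum_mul, total_inAffinity hn X ρ, one_mul]
  rw [hlogS, ← Finset.sum_add_distrib, ← Finset.sum_add_distrib, tsneLoss]
  apply Finset.sum_congr rfl
  intro p hp
  obtain ⟨-, -, hne⟩ := Finset.mem_offDiag.1 hp
  set P : ℝ := inAffinity X ρ p.1 p.2 with hP
  set r : ℝ := ‖Z p.1 - Z p.2‖ ^ 2 with hr
  have hrpos : (0:ℝ) < 1 + r := by positivity
  by_cases hP0 : P = 0
  · rw [hP0]; ring
  · have hQ : outAffinity Z p.1 p.2 = (1 + r)⁻¹ / S := by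
      rw [outAffinity, if_neg hne]
    have hdiv : P / outAffinity Z p.1 p.2 = P * ((1 + r) * S) := by
      rw [hQ, div_eq_mul_inv ((1+r)⁻¹) S, ← mul_inv, div_eq_mul_inv, inv_inv]
    rw [hdiv, Real.log_mul hP0 (mul_pos hrpos hSpos).ne', Real.log_mul (ne_of_gt hrpos) (ne_of_gt hSpos)]
    ring

lemma diff_normsq {d : ℕ} (i j : Fin n) :
    Differentiable ℝ (fun Z : Fin n → EuclideanSpace ℝ (Fin d) => ‖Z i - Z j‖ ^ 2) := by
  have h : (fun Z : Fin n → EuclideanSpace ℝ (Fin d) => ‖Z i - Z j‖ ^ 2)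
      = fun Z => ⟪Z i - Z j, Z i - Z j⟫ :=
    funext fun Z => (real_inner_self_eq_norm_sq _).symm
  rw [h]
  have hsub : Differentiable ℝ (fun Z : Fin n → EuclideanSpace ℝ (Fin d) => Z i - Z j) :=
    (differentiable_apply i).sub (differentiable_apply j)
  exact hsub.inner ℝ hsub

lemma diffAt_F {d : ℕ} (hn : 2 ≤ n) (P : Fin n × Fin n → ℝ)
    (Z : Fin n → EuclideanSpace ℝ (Fin d)) :
    DifferentiableAt ℝ (fun W : Fin n → EuclideanSpace ℝ (Fin d) =>
      (∑ p ∈ (Finset.univ : Finset (Fin n)).offDiag,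
        P p * Real.log (1 + ‖W p.1 - W p.2‖ ^ 2)) +
      Real.log (∑ p ∈ (Finset.univ : Finset (Fin n)).offDiag, (1 + ‖W p.1 - W p.2‖ ^ 2)⁻¹)) Z := by
  have hterm : ∀ p ∈ (Finset.univ : Finset (Fin n)).offDiag, DifferentiableAt ℝ
      (fun W : Fin n → EuclideanSpace ℝ (Fin d) => P p * Real.log (1 + ‖W p.1 - W p.2‖ ^ 2)) Z := by
    intro p _
    exact (((((diff_normsq p.1 p.2) Z).const_add 1).log (by positivity)).const_mul (P p))
  have hinv : ∀ p ∈ (Finset.univ : Finset (Fin n)).offDiag, DifferentiableAt ℝ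
      (fun W : Fin n → EuclideanSpace ℝ (Fin d) => (1 + ‖W p.1 - W p.2‖ ^ 2)⁻¹) Z := by
    intro p _
    exact (((diff_normsq p.1 p.2) Z).const_add 1).inv (by positivity)
  exact (DifferentiableAt.fun_sum hterm).add
    ((DifferentiableAt.fun_sum hinv).log (ne_of_gt (qSum_pos hn Z)))

lemma hasDerivAt_normsq_line {d : ℕ} (a b : EuclideanSpace ℝ (Fin d)) :
    HasDerivAt (fun t : ℝ => ‖a + t • b‖ ^ 2) (2 * ⟪a, b⟫) 0 := by
  have h : (fun t : ℝ => ‖a + t • b‖ ^ 2)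
      = fun t => ‖a‖ ^ 2 + (2 * ⟪a, b⟫) * t + ‖b‖ ^ 2 * (t * t) := by
    funext t
    rw [norm_add_sq_real, real_inner_smul_right, norm_smul, mul_pow, Real.norm_eq_abs, sq_abs]
    ring
  rw [h]
  have h1 : HasDerivAt (fun t : ℝ => (2 * ⟪a, b⟫) * t) (2 * ⟪a, b⟫) 0 := by
    simpa using (hasDerivAt_id (0:ℝ)).const_mul (2 * ⟪a, b⟫)
  have h2 : HasDerivAt (fun t : ℝ => ‖b‖ ^ 2 * (t * t)) 0 0 := by
    have := ((hasDerivAt_id (0:ℝ)).mul (hasDerivAt_id (0:ℝ))).const_mul (‖b‖ ^ 2)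
    simpa using this
  have h3 := (h1.const_add (‖a‖ ^ 2)).add h2
  simp only [add_zero] at h3
  exact h3

lemma hasDerivAt_log_line {d : ℕ} (a b : EuclideanSpace ℝ (Fin d)) :
    HasDerivAt (fun t : ℝ => Real.log (1 + ‖a + t • b‖ ^ 2))
      (2 * ⟪a, b⟫ / (1 + ‖a‖ ^ 2)) 0 := by
  have h0 : HasDerivAt (fun t : ℝ => 1 + ‖a + t • b‖ ^ 2) (2 * ⟪a, b⟫) 0 :=
    (hasDerivAt_normsq_line a b).const_add 1
  have h1 := h0.log (by positivity)
  simpa only [zero_smul, add_zero] using h1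

lemma hasDerivAt_inv_line {d : ℕ} (a b : EuclideanSpace ℝ (Fin d)) :
    HasDerivAt (fun t : ℝ => (1 + ‖a + t • b‖ ^ 2)⁻¹)
      (-(2 * ⟪a, b⟫) / (1 + ‖a‖ ^ 2) ^ 2) 0 := by
  have h0 : HasDerivAt (fun t : ℝ => 1 + ‖a + t • b‖ ^ 2) (2 * ⟪a, b⟫) 0 :=
    (hasDerivAt_normsq_line a b).const_add 1
  have h1 := h0.inv (by positivity)
  simp only [zero_smul, add_zero] at h1
  exact h1

lemma stationary_eq {d : ℕ} [NormedAddCommGroup E] (hn : 2 ≤ n) (X : Fin n → E) (ρ : ℝ)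
    (Y : Fin n → EuclideanSpace ℝ (Fin d)) (hY : fderiv ℝ (tsneLoss X ρ) Y = 0)
    (w : Fin n → EuclideanSpace ℝ (Fin d)) :
    (∑ p ∈ (Finset.univ : Finset (Fin n)).offDiag, inAffinity X ρ p.1 p.2 *
        (2 * ⟪Y p.1 - Y p.2, w p.1 - w p.2⟫ / (1 + ‖Y p.1 - Y p.2‖ ^ 2))) +
      (∑ p ∈ (Finset.univ : Finset (Fin n)).offDiag,
        -(2 * ⟪Y p.1 - Y p.2, w p.1 - w p.2⟫) / (1 + ‖Y p.1 - Y p.2‖ ^ 2) ^ 2) /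
      (∑ p ∈ (Finset.univ : Finset (Fin n)).offDiag, (1 + ‖Y p.1 - Y p.2‖ ^ 2)⁻¹) = 0 := by
  classical
  set F : (Fin n → EuclideanSpace ℝ (Fin d)) → ℝ := fun W =>
      (∑ p ∈ (Finset.univ : Finset (Fin n)).offDiag,
        inAffinity X ρ p.1 p.2 * Real.log (1 + ‖W p.1 - W p.2‖ ^ 2)) +
      Real.log (∑ p ∈ (Finset.univ : Finset (Fin n)).offDiag, (1 + ‖W p.1 - W p.2‖ ^ 2)⁻¹)
    with hF
  have hfun : tsneLoss X ρ = fun Z => (∑ p ∈ (Finset.univ : Finset (Fin n)).offDiag,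
      inAffinity X ρ p.1 p.2 * Real.log (inAffinity X ρ p.1 p.2)) + F Z :=
    funext fun Z => tsneLoss_eq hn X ρ Z
  rw [hfun, fderiv_const_add] at hY
  -- the line through `Y` in direction `w`
  set c : ℝ → (Fin n → EuclideanSpace ℝ (Fin d)) := fun t => fun i => Y i + t • w i with hc
  have hc0 : c 0 = Y := by
    funext i
    simp [hc]
  have hcd : HasDerivAt c w 0 := by
    apply hasDerivAt_pi.2
    intro i
    simpa [hc] using ((hasDerivAt_id (0:ℝ)).smul_const (w i)).const_add (Y i)
  have hzero : HasDerivAt (fun t => F (c t)) 0 0 := by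
    have hdF : HasFDerivAt F (0 : (Fin n → EuclideanSpace ℝ (Fin d)) →L[ℝ] ℝ) Y := by
      have := (diffAt_F hn (fun p => inAffinity X ρ p.1 p.2) Y).hasFDerivAt
      rwa [hY] at this
    have hdF' : HasFDerivAt F (0 : (Fin n → EuclideanSpace ℝ (Fin d)) →L[ℝ] ℝ) (c 0) := by
      rw [hc0]; exact hdF
    have := hdF'.comp_hasDerivAt (x := (0:ℝ)) hcd
    simp only [ContinuousLinearMap.zero_apply] at this
    exact this
  have hexp : HasDerivAt (fun t => F (c t))
      ((∑ p ∈ (Finset.univ : Finset (Fin n)).offDiag, inAffinity X ρ p.1 p.2 *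
        (2 * ⟪Y p.1 - Y p.2, w p.1 - w p.2⟫ / (1 + ‖Y p.1 - Y p.2‖ ^ 2))) +
      (∑ p ∈ (Finset.univ : Finset (Fin n)).offDiag,
        -(2 * ⟪Y p.1 - Y p.2, w p.1 - w p.2⟫) / (1 + ‖Y p.1 - Y p.2‖ ^ 2) ^ 2) /
      (∑ p ∈ (Finset.univ : Finset (Fin n)).offDiag, (1 + ‖Y p.1 - Y p.2‖ ^ 2)⁻¹)) 0 := by
    have hrew : (fun t => F (c t)) = fun t : ℝ =>
        (∑ p ∈ (Finset.univ : Finset (Fin n)).offDiag, inAffinity X ρ p.1 p.2 *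
          Real.log (1 + ‖(Y p.1 - Y p.2) + t • (w p.1 - w p.2)‖ ^ 2)) +
        Real.log (∑ p ∈ (Finset.univ : Finset (Fin n)).offDiag,
          (1 + ‖(Y p.1 - Y p.2) + t • (w p.1 - w p.2)‖ ^ 2)⁻¹) := by
      funext t
      have harg : ∀ p : Fin n × Fin n, c t p.1 - c t p.2
          = (Y p.1 - Y p.2) + t • (w p.1 - w p.2) := by
        intro p
        simp only [hc, smul_sub]
        abel
      simp only [hF, harg]
    rw [hrew]
    have hsum1 : HasDerivAt (fun t : ℝ => ∑ p ∈ (Finset.univ : Finset (Fin n)).offDiag,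
        inAffinity X ρ p.1 p.2 * Real.log (1 + ‖(Y p.1 - Y p.2) + t • (w p.1 - w p.2)‖ ^ 2))
        (∑ p ∈ (Finset.univ : Finset (Fin n)).offDiag, inAffinity X ρ p.1 p.2 *
          (2 * ⟪Y p.1 - Y p.2, w p.1 - w p.2⟫ / (1 + ‖Y p.1 - Y p.2‖ ^ 2))) 0 :=
      HasDerivAt.fun_sum fun p _ =>
        (hasDerivAt_log_line (Y p.1 - Y p.2) (w p.1 - w p.2)).const_mul (inAffinity X ρ p.1 p.2)
    have hsum2 : HasDerivAt (fun t : ℝ => ∑ p ∈ (Finset.univ : Finset (Fin n)).offDiag,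
        (1 + ‖(Y p.1 - Y p.2) + t • (w p.1 - w p.2)‖ ^ 2)⁻¹)
        (∑ p ∈ (Finset.univ : Finset (Fin n)).offDiag,
          -(2 * ⟪Y p.1 - Y p.2, w p.1 - w p.2⟫) / (1 + ‖Y p.1 - Y p.2‖ ^ 2) ^ 2) 0 :=
      HasDerivAt.fun_sum fun p _ => hasDerivAt_inv_line (Y p.1 - Y p.2) (w p.1 - w p.2)
    have hlog2 := hsum2.log (by
      simp only [zero_smul, add_zero]
      exact ne_of_gt (qSum_pos hn Y))
    have := hsum1.add hlog2
    simp only [zero_smul, add_zero] at this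
    exact this
  exact (hexp.unique hzero)

lemma stationary_centered {d : ℕ} [NormedAddCommGroup E] (hn : 2 ≤ n) (X : Fin n → E) (ρ : ℝ)
    (Y : Fin n → EuclideanSpace ℝ (Fin d)) (hY : fderiv ℝ (tsneLoss X ρ) Y = 0)
    (i0 : Fin n) (z : EuclideanSpace ℝ (Fin d)) :
    ∑ j ∈ Finset.univ.erase i0,
        inAffinity X ρ i0 j * (⟪Y i0 - Y j, z⟫ * (1 + ‖Y i0 - Y j‖ ^ 2)⁻¹)
      = (∑ j ∈ Finset.univ.erase i0, ⟪Y i0 - Y j, z⟫ * ((1 + ‖Y i0 - Y j‖ ^ 2)⁻¹) ^ 2) /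
        (∑ p ∈ (Finset.univ : Finset (Fin n)).offDiag, (1 + ‖Y p.1 - Y p.2‖ ^ 2)⁻¹) := by
  classical
  set w : Fin n → EuclideanSpace ℝ (Fin d) := fun i => if i = i0 then z else 0 with hw
  have hst := stationary_eq hn X ρ Y hY w
  have hvan : ∀ p ∈ (Finset.univ : Finset (Fin n)).offDiag, p.1 ≠ i0 → p.2 ≠ i0 →
      (fun p : Fin n × Fin n => inAffinity X ρ p.1 p.2 *
        (2 * ⟪Y p.1 - Y p.2, w p.1 - w p.2⟫ / (1 + ‖Y p.1 - Y p.2‖ ^ 2))) p = 0 := by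
    intro p _ h1 h2
    simp [hw, if_neg h1, if_neg h2]
  have hvan2 : ∀ p ∈ (Finset.univ : Finset (Fin n)).offDiag, p.1 ≠ i0 → p.2 ≠ i0 →
      (fun p : Fin n × Fin n =>
        -(2 * ⟪Y p.1 - Y p.2, w p.1 - w p.2⟫) / (1 + ‖Y p.1 - Y p.2‖ ^ 2) ^ 2) p = 0 := by
    intro p _ h1 h2
    simp [hw, if_neg h1, if_neg h2]
  rw [sum_offDiag_split i0 _ hvan, sum_offDiag_split i0 _ hvan2] at hst
  have he1 : ∀ j ∈ Finset.univ.erase i0,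
      (inAffinity X ρ i0 j * (2 * ⟪Y i0 - Y j, w i0 - w j⟫ / (1 + ‖Y i0 - Y j‖ ^ 2)) +
       inAffinity X ρ j i0 * (2 * ⟪Y j - Y i0, w j - w i0⟫ / (1 + ‖Y j - Y i0‖ ^ 2)))
      = 4 * (inAffinity X ρ i0 j * (⟪Y i0 - Y j, z⟫ * (1 + ‖Y i0 - Y j‖ ^ 2)⁻¹)) := by
    intro j hj
    have hji : j ≠ i0 := Finset.ne_of_mem_erase hj
    have hw1 : w i0 - w j = z := by simp [hw, if_neg hji]
    have hw2 : w j - w i0 = -z := by simp [hw, if_neg hji]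
    have hinner : ⟪Y j - Y i0, w j - w i0⟫ = ⟪Y i0 - Y j, z⟫ := by
      rw [hw2, ← neg_sub (Y i0) (Y j), inner_neg_neg]
    rw [hw1, hinner, norm_sub_rev (Y j) (Y i0), inAffinity_symm X ρ j i0]
    ring
  have he2 : ∀ j ∈ Finset.univ.erase i0,
      (-(2 * ⟪Y i0 - Y j, w i0 - w j⟫) / (1 + ‖Y i0 - Y j‖ ^ 2) ^ 2 +
       -(2 * ⟪Y j - Y i0, w j - w i0⟫) / (1 + ‖Y j - Y i0‖ ^ 2) ^ 2)
      = -(4 * (⟪Y i0 - Y j, z⟫ * ((1 + ‖Y i0 - Y j‖ ^ 2)⁻¹) ^ 2)) := by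
    intro j hj
    have hji : j ≠ i0 := Finset.ne_of_mem_erase hj
    have hw1 : w i0 - w j = z := by simp [hw, if_neg hji]
    have hw2 : w j - w i0 = -z := by simp [hw, if_neg hji]
    have hinner : ⟪Y j - Y i0, w j - w i0⟫ = ⟪Y i0 - Y j, z⟫ := by
      rw [hw2, ← neg_sub (Y i0) (Y j), inner_neg_neg]
    rw [hw1, hinner, norm_sub_rev (Y j) (Y i0), div_eq_mul_inv, ← inv_pow]
    ring
  rw [Finset.sum_congr rfl he1, Finset.sum_congr rfl he2, ← Finset.mul_sum,
    Finset.sum_neg_distrib, ← Finset.mul_sum, neg_div, mul_div_assoc] at hst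
  have hS : 0 < ∑ p ∈ (Finset.univ : Finset (Fin n)).offDiag, (1 + ‖Y p.1 - Y p.2‖ ^ 2)⁻¹ :=
    qSum_pos hn Y
  linarith [hst]

lemma alg1 (dd m D : ℝ) (hm : 0 < m) (hd : m ≤ dd) (hD : 0 ≤ D) (hDm : D ≤ m) :
    (m^2 - m*D) * (1+m^2)⁻¹ ≤ (dd^2 - dd*D) * (1+dd^2)⁻¹ := by
  rw [← div_eq_mul_inv, ← div_eq_mul_inv, div_le_div_iff₀ (by positivity) (by positivity)]
  have hp : (0:ℝ) ≤ D*m*dd := mul_nonneg (mul_nonneg hD hm.le) (le_trans hm.le hd)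
  nlinarith [mul_nonneg (sub_nonneg.2 hd) (by nlinarith [hp] : (0:ℝ) ≤ dd + m - D + D*m*dd)]

lemma alg2 (dd m D : ℝ) (h1 : 1 ≤ m) (hd : m ≤ dd) (hD : 0 ≤ D) :
    (dd^2 + dd*D) * ((1+dd^2)⁻¹)^2 ≤ (m^2 + m*D) * ((1+m^2)⁻¹)^2 := by
  have hm0 : (0:ℝ) < m := lt_of_lt_of_le one_pos h1
  have hdm1 : (1:ℝ) ≤ dd * m := by nlinarith
  have hA : dd*(1+m^2) ≤ m*(1+dd^2) := by nlinarith [mul_nonneg (sub_nonneg.2 hd) (sub_nonneg.2 hdm1)]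
  have hB : dd*(1+m^2)^2 ≤ m*(1+dd^2)^2 := by nlinarith [hA]
  have hd0 : (0:ℝ) < dd := lt_of_lt_of_le hm0 hd
  have hC : dd^2*(1+m^2)^2 ≤ m^2*(1+dd^2)^2 := by
    nlinarith [mul_le_mul hA hA (by positivity : (0:ℝ) ≤ dd*(1+m^2)) (by positivity : (0:ℝ) ≤ m*(1+dd^2))]
  rw [inv_pow, inv_pow, ← div_eq_mul_inv, ← div_eq_mul_inv,
    div_le_div_iff₀ (by positivity) (by positivity)]
  nlinarith [hC, mul_le_mul_of_nonneg_left hB hD]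

lemma alg3 (α D M K : ℝ) (hα : 1 < α) (hD : 0 ≤ D) (hM : M = max 1 D) (hK : 0 < K)
    (hineq : (4/K) * ((α*M - D) * (1 + (α*M)^2)) ≤ (1+M^2) * (α*M + D)) :
    α^2 ≤ 1 + K := by
  have hM1 : 1 ≤ M := hM ▸ le_max_left 1 D
  have hDM : D ≤ M := hM ▸ le_max_right 1 D
  have hM0 : (0:ℝ) < M := lt_of_lt_of_le one_pos hM1
  have hMlt : M < α * M := by nlinarith
  have hX : 0 < (α*M - D) * (1 + (α*M)^2) := by
    have : D < α * M := lt_of_le_of_lt hDM hMlt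
    nlinarith
  have hR : 0 < (1+M^2) * (α*M + D) := by nlinarith
  -- key polynomial inequality
  have h4 : (α^2-1) * ((1+M^2) * (α*M + D)) ≤ 4 * ((α*M - D) * (1 + (α*M)^2)) := by
    rcases max_choice 1 D with h | h
    · have hM1' : M = 1 := by rw [hM, h]
      have hD1 : D ≤ 1 := h ▸ le_max_right 1 D
      subst hM1'
      nlinarith [mul_nonneg (mul_nonneg (sub_nonneg.2 hα.le) (sub_nonneg.2 hα.le))
        (sub_nonneg.2 hα.le), mul_nonneg (sub_nonneg.2 hD1) (by positivity : (0:ℝ) ≤ 6*α^2 + 2)]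
    · have hMD : M = D := by rw [hM, h]
      have hD1 : 1 ≤ D := by rw [← hMD]; exact hM1
      subst hMD
      have hgap : 0 ≤ (3*α+1)*M^2 - (α+3) := by nlinarith
      have hkey : (α+1)^2 * (1+M^2) ≤ 4*(1+α^2*M^2) := by
        nlinarith [mul_nonneg (sub_nonneg.2 hα.le) hgap]
      nlinarith [mul_le_mul_of_nonneg_left hkey (mul_nonneg hM0.le (sub_nonneg.2 hα.le))]
  -- combine
  have h5 : 4 * ((α*M - D) * (1 + (α*M)^2)) ≤ K * ((1+M^2) * (α*M + D)) := by
    have := mul_le_mul_of_nonneg_left hineq hK.le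
    rw [← mul_assoc, mul_div_cancel₀ _ (ne_of_gt hK)] at this
    linarith [this]
  have h6 : (α^2-1) * ((1+M^2) * (α*M + D)) ≤ K * ((1+M^2) * (α*M + D)) := le_trans h4 h5
  nlinarith [h6, hR]

set_option maxHeartbeats 1000000 in
theorem outlier_bound_aux {d : ℕ} [NormedAddCommGroup E] (hn : 2 < n)
    (ρ : ℝ) (Y : Fin n → EuclideanSpace ℝ (Fin d))
    (X : Fin n → E) (hfd : fderiv ℝ (tsneLoss X ρ) Y = 0) (i0 : Fin n) :
    outlierNumber Y i0 ≤
      Real.sqrt (1 + (1 + 2 / ((n : ℝ) - 2)) *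
        (8 / (1 + ∑ i ∈ Finset.univ.erase i0,
          condAffinity X (sigmaStar X ρ i) i i0))) := by
  classical
  have hn2 : 2 ≤ n := hn.le
  have hnR : (2:ℝ) < (n:ℝ) := by exact_mod_cast hn
  set Sg : ℝ := ∑ i ∈ Finset.univ.erase i0, condAffinity X (sigmaStar X ρ i) i i0 with hSg
  have hSg0 : 0 ≤ Sg :=
    Finset.sum_nonneg fun i _ => condAffinity_nonneg X _ i i0
  set K : ℝ := 8 * (n:ℝ) / (((n:ℝ) - 2) * (1 + Sg)) with hKdef
  have hKpos : 0 < K := by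
    apply div_pos (by positivity)
    apply mul_pos (by linarith) (by linarith)
  have hBeq : 1 + (1 + 2 / ((n : ℝ) - 2)) * (8 / (1 + Sg)) = 1 + K := by
    rw [hKdef]
    have h1 : ((n:ℝ) - 2) ≠ 0 := by linarith
    have h2 : (1 + Sg) ≠ 0 := by linarith
    field_simp
    ring
  rw [hBeq]
  have hsq1 : (1:ℝ) ≤ Real.sqrt (1 + K) := by
    rw [show (1:ℝ) = Real.sqrt 1 from Real.sqrt_one.symm]
    exact Real.sqrt_le_sqrt (by rw [Real.sqrt_one]; linarith)
  apply Real.sSup_le ?_ (le_trans zero_le_one hsq1)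
  intro α hα
  obtain ⟨hα0, v, hv, hsep⟩ := hα
  rcases le_or_gt α 1 with hle | hgt
  · exact le_trans hle hsq1
  -- main case : 1 < α
  rw [← Real.sqrt_sq hα0.le]
  apply Real.sqrt_le_sqrt
  -- notation
  set D : ℝ := Metric.diam (Y '' {i : Fin n | i ≠ i0}) with hDdef
  have hD0 : 0 ≤ D := Metric.diam_nonneg
  set M : ℝ := max 1 D with hMdef
  have hM1 : 1 ≤ M := le_max_left 1 D
  have hDM : D ≤ M := le_max_right 1 D
  have hM0 : (0:ℝ) < M := lt_of_lt_of_le one_pos hM1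
  set m : ℝ := α * M with hmdef
  have hm1 : 1 < m := by nlinarith
  have hm0 : 0 < m := lt_trans one_pos hm1
  have hmD : D < m := by nlinarith
  have hbd : Bornology.IsBounded (Y '' {i : Fin n | i ≠ i0}) :=
    ((Set.toFinite {i : Fin n | i ≠ i0}).image Y).isBounded
  have hdist : ∀ j k : Fin n, j ≠ i0 → k ≠ i0 → ‖Y j - Y k‖ ≤ D := by
    intro j k hj hk
    rw [← dist_eq_norm]
    exact Metric.dist_le_diam_of_mem hbd ⟨j, hj, rfl⟩ ⟨k, hk, rfl⟩
  have hdm : ∀ j ∈ Finset.univ.erase i0, m ≤ ‖Y i0 - Y j‖ := by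
    intro j hj
    have h1 := hsep j (Finset.ne_of_mem_erase hj)
    calc m ≤ ⟪Y j - Y i0, v⟫ := h1
      _ ≤ ‖Y j - Y i0‖ * ‖v‖ := real_inner_le_norm _ _
      _ = ‖Y i0 - Y j‖ := by rw [hv, mul_one, norm_sub_rev]
  -- the centroid of the non-outlier points
  have hn1R : (0:ℝ) < (n:ℝ) - 1 := by linarith
  have hcard : (((Finset.univ : Finset (Fin n)).erase i0).card : ℝ) = (n:ℝ) - 1 := by
    rw [Finset.card_erase_of_mem (Finset.mem_univ _), Finset.card_univ, Fintype.card_fin,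
      Nat.cast_sub (by omega), Nat.cast_one]
  set c : EuclideanSpace ℝ (Fin d) :=
    ((n:ℝ) - 1)⁻¹ • ∑ k ∈ Finset.univ.erase i0, Y k with hcdef
  have hYc : ∀ j ∈ Finset.univ.erase i0, ‖Y j - c‖ ≤ D := by
    intro j hj
    have h1 : Y j - c = ((n:ℝ) - 1)⁻¹ • ∑ k ∈ Finset.univ.erase i0, (Y j - Y k) := by
      rw [Finset.sum_sub_distrib, Finset.sum_const, ← Nat.cast_smul_eq_nsmul ℝ, hcard,
        smul_sub, smul_smul, inv_mul_cancel₀ (ne_of_gt hn1R), one_smul, hcdef]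
    rw [h1, norm_smul, Real.norm_eq_abs,
      abs_of_nonneg (by positivity : (0:ℝ) ≤ ((n:ℝ) - 1)⁻¹)]
    have h2 : ‖∑ k ∈ Finset.univ.erase i0, (Y j - Y k)‖ ≤ ((n:ℝ) - 1) * D := by
      calc ‖∑ k ∈ Finset.univ.erase i0, (Y j - Y k)‖
          ≤ ∑ k ∈ Finset.univ.erase i0, ‖Y j - Y k‖ := norm_sum_le _ _
        _ ≤ ∑ _k ∈ Finset.univ.erase i0, D := Finset.sum_le_sum fun k hk =>
            hdist j k (Finset.ne_of_mem_erase hj) (Finset.ne_of_mem_erase hk)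
        _ = ((n:ℝ) - 1) * D := by rw [Finset.sum_const, nsmul_eq_mul, hcard]
    calc ((n:ℝ) - 1)⁻¹ * ‖∑ k ∈ Finset.univ.erase i0, (Y j - Y k)‖
        ≤ ((n:ℝ) - 1)⁻¹ * (((n:ℝ) - 1) * D) :=
          mul_le_mul_of_nonneg_left h2 (by positivity)
      _ = D := by field_simp
  -- the test vector
  set z : EuclideanSpace ℝ (Fin d) := Y i0 - c with hzdef
  have hstat := stationary_centered hn2 X ρ Y hfd i0 z
  -- inner product bounds
  have hA_lb : ∀ j ∈ Finset.univ.erase i0,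
      ‖Y i0 - Y j‖ ^ 2 - ‖Y i0 - Y j‖ * D ≤ ⟪Y i0 - Y j, z⟫ := by
    intro j hj
    have hzj : z = (Y i0 - Y j) + (Y j - c) := by rw [hzdef]; abel
    rw [hzj, inner_add_right, real_inner_self_eq_norm_sq]
    have h3 : |⟪Y i0 - Y j, Y j - c⟫| ≤ ‖Y i0 - Y j‖ * D := by
      calc |⟪Y i0 - Y j, Y j - c⟫| ≤ ‖Y i0 - Y j‖ * ‖Y j - c‖ := abs_real_inner_le_norm _ _
        _ ≤ ‖Y i0 - Y j‖ * D := mul_le_mul_of_nonneg_left (hYc j hj) (norm_nonneg _)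
    linarith [(abs_le.1 h3).1]
  have hA_ub : ∀ j ∈ Finset.univ.erase i0,
      ⟪Y i0 - Y j, z⟫ ≤ ‖Y i0 - Y j‖ ^ 2 + ‖Y i0 - Y j‖ * D := by
    intro j hj
    have hzj : z = (Y i0 - Y j) + (Y j - c) := by rw [hzdef]; abel
    rw [hzj, inner_add_right, real_inner_self_eq_norm_sq]
    have h3 : |⟪Y i0 - Y j, Y j - c⟫| ≤ ‖Y i0 - Y j‖ * D := by
      calc |⟪Y i0 - Y j, Y j - c⟫| ≤ ‖Y i0 - Y j‖ * ‖Y j - c‖ := abs_real_inner_le_norm _ _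
        _ ≤ ‖Y i0 - Y j‖ * D := mul_le_mul_of_nonneg_left (hYc j hj) (norm_nonneg _)
    linarith [(abs_le.1 h3).2]
  -- step (i): lower bound for the attraction sum
  set p : ℝ := ∑ j ∈ Finset.univ.erase i0, inAffinity X ρ i0 j with hpdef
  have hp0 : 0 ≤ p := Finset.sum_nonneg fun j _ => inAffinity_nonneg X ρ i0 j
  have h_lhs : p * ((m^2 - m*D) * (1 + m^2)⁻¹) ≤
      ∑ j ∈ Finset.univ.erase i0,
        inAffinity X ρ i0 j * (⟪Y i0 - Y j, z⟫ * (1 + ‖Y i0 - Y j‖ ^ 2)⁻¹) := by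
    rw [hpdef, Finset.sum_mul]
    apply Finset.sum_le_sum
    intro j hj
    apply mul_le_mul_of_nonneg_left ?_ (inAffinity_nonneg X ρ i0 j)
    calc (m^2 - m*D) * (1 + m^2)⁻¹
        ≤ (‖Y i0 - Y j‖^2 - ‖Y i0 - Y j‖*D) * (1 + ‖Y i0 - Y j‖^2)⁻¹ :=
          alg1 ‖Y i0 - Y j‖ m D hm0 (hdm j hj) hD0 hmD.le
      _ ≤ ⟪Y i0 - Y j, z⟫ * (1 + ‖Y i0 - Y j‖^2)⁻¹ :=
          mul_le_mul_of_nonneg_right (hA_lb j hj) (by positivity)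
  -- step (iii)+(iv): bounds for the repulsion numerator
  have h_num_0 : 0 ≤ ∑ j ∈ Finset.univ.erase i0,
      ⟪Y i0 - Y j, z⟫ * ((1 + ‖Y i0 - Y j‖ ^ 2)⁻¹) ^ 2 := by
    apply Finset.sum_nonneg
    intro j hj
    have h1 : (0:ℝ) ≤ ‖Y i0 - Y j‖^2 - ‖Y i0 - Y j‖*D := by
      have := hdm j hj
      nlinarith
    exact mul_nonneg (le_trans h1 (hA_lb j hj)) (by positivity)
  have h_num_ub : ∑ j ∈ Finset.univ.erase i0,
      ⟪Y i0 - Y j, z⟫ * ((1 + ‖Y i0 - Y j‖ ^ 2)⁻¹) ^ 2 ≤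
      ((n:ℝ) - 1) * ((m^2 + m*D) * ((1 + m^2)⁻¹)^2) := by
    calc ∑ j ∈ Finset.univ.erase i0, ⟪Y i0 - Y j, z⟫ * ((1 + ‖Y i0 - Y j‖ ^ 2)⁻¹) ^ 2
        ≤ ∑ _j ∈ Finset.univ.erase i0, (m^2 + m*D) * ((1 + m^2)⁻¹)^2 := by
          apply Finset.sum_le_sum
          intro j hj
          calc ⟪Y i0 - Y j, z⟫ * ((1 + ‖Y i0 - Y j‖ ^ 2)⁻¹) ^ 2
              ≤ (‖Y i0 - Y j‖^2 + ‖Y i0 - Y j‖*D) * ((1 + ‖Y i0 - Y j‖^2)⁻¹)^2 :=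
                mul_le_mul_of_nonneg_right (hA_ub j hj) (by positivity)
            _ ≤ (m^2 + m*D) * ((1 + m^2)⁻¹)^2 :=
                alg2 ‖Y i0 - Y j‖ m D hm1.le (hdm j hj) hD0
      _ = ((n:ℝ) - 1) * ((m^2 + m*D) * ((1 + m^2)⁻¹)^2) := by
          rw [Finset.sum_const, nsmul_eq_mul, hcard]
  -- step (v): lower bound on the normalizing sum
  set S0 : ℝ := ∑ q ∈ (Finset.univ : Finset (Fin n)).offDiag, (1 + ‖Y q.1 - Y q.2‖ ^ 2)⁻¹
    with hS0def
  have hS0pos : 0 < S0 := qSum_pos hn2 Y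
  have h_S_lb : ((n:ℝ) - 1) * ((n:ℝ) - 2) * (1 + M^2)⁻¹ ≤ S0 := by
    have hsub : ((Finset.univ : Finset (Fin n)).erase i0).offDiag ⊆
        (Finset.univ : Finset (Fin n)).offDiag := by
      intro q hq
      obtain ⟨h1, h2, h3⟩ := Finset.mem_offDiag.1 hq
      exact Finset.mem_offDiag.2 ⟨Finset.mem_univ _, Finset.mem_univ _, h3⟩
    have hcard2 : ((((Finset.univ : Finset (Fin n)).erase i0).offDiag.card : ℝ)) =
        ((n:ℝ) - 1) * ((n:ℝ) - 2) := by
      rw [Finset.offDiag_card]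
      have hle : ((Finset.univ : Finset (Fin n)).erase i0).card ≤
          ((Finset.univ : Finset (Fin n)).erase i0).card *
          ((Finset.univ : Finset (Fin n)).erase i0).card :=
        Nat.le_mul_of_pos_left _ (by
          rw [Finset.card_erase_of_mem (Finset.mem_univ _), Finset.card_univ, Fintype.card_fin]
          omega)
      rw [Nat.cast_sub hle, Nat.cast_mul, hcard]
      ring
    calc ((n:ℝ) - 1) * ((n:ℝ) - 2) * (1 + M^2)⁻¹
        = ∑ _q ∈ ((Finset.univ : Finset (Fin n)).erase i0).offDiag, (1 + M^2)⁻¹ := by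
          rw [Finset.sum_const, nsmul_eq_mul, hcard2]
      _ ≤ ∑ q ∈ ((Finset.univ : Finset (Fin n)).erase i0).offDiag,
            (1 + ‖Y q.1 - Y q.2‖ ^ 2)⁻¹ := by
          apply Finset.sum_le_sum
          intro q hq
          obtain ⟨h1, h2, -⟩ := Finset.mem_offDiag.1 hq
          have hq1 : ‖Y q.1 - Y q.2‖ ≤ M :=
            le_trans (hdist q.1 q.2 (Finset.ne_of_mem_erase h1) (Finset.ne_of_mem_erase h2)) hDM
          apply inv_anti₀ (by positivity)
          have : ‖Y q.1 - Y q.2‖^2 ≤ M^2 := by nlinarith [norm_nonneg (Y q.1 - Y q.2)]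
          linarith
      _ ≤ S0 := Finset.sum_le_sum_of_subset_of_nonneg hsub fun q _ _ => by positivity
  -- combine
  have hLN : (∑ j ∈ Finset.univ.erase i0,
      inAffinity X ρ i0 j * (⟪Y i0 - Y j, z⟫ * (1 + ‖Y i0 - Y j‖ ^ 2)⁻¹)) * S0 =
      ∑ j ∈ Finset.univ.erase i0, ⟪Y i0 - Y j, z⟫ * ((1 + ‖Y i0 - Y j‖ ^ 2)⁻¹) ^ 2 :=
    (eq_div_iff (ne_of_gt hS0pos)).1 hstat
  have hpa0 : 0 ≤ p * ((m^2 - m*D) * (1 + m^2)⁻¹) := by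
    have : (0:ℝ) ≤ m^2 - m*D := by nlinarith
    positivity
  have h7 : (p * ((m^2 - m*D) * (1 + m^2)⁻¹)) * (((n:ℝ) - 1) * ((n:ℝ) - 2) * (1 + M^2)⁻¹) ≤
      ((n:ℝ) - 1) * ((m^2 + m*D) * ((1 + m^2)⁻¹)^2) := by
    calc (p * ((m^2 - m*D) * (1 + m^2)⁻¹)) * (((n:ℝ) - 1) * ((n:ℝ) - 2) * (1 + M^2)⁻¹)
        ≤ (∑ j ∈ Finset.univ.erase i0,
            inAffinity X ρ i0 j * (⟪Y i0 - Y j, z⟫ * (1 + ‖Y i0 - Y j‖ ^ 2)⁻¹)) * S0 := by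
          apply mul_le_mul h_lhs h_S_lb
            (mul_nonneg (mul_nonneg (by linarith) (by linarith)) (by positivity))
            (le_trans hpa0 h_lhs)
      _ = _ := hLN
      _ ≤ ((n:ℝ) - 1) * ((m^2 + m*D) * ((1 + m^2)⁻¹)^2) := h_num_ub
  -- clear denominators
  have hQ0 : (0:ℝ) < 1 + m^2 := by positivity
  have hR0 : (0:ℝ) < 1 + M^2 := by positivity
  have h8 : p * ((n:ℝ) - 2) * (m * ((m - D) * (1 + m^2))) * ((n:ℝ) - 1) ≤
      (1 + M^2) * (m * (m + D)) * ((n:ℝ) - 1) := by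
    have h9 := mul_le_mul_of_nonneg_right h7
      (le_of_lt (show (0:ℝ) < (1 + m^2)^2 * (1 + M^2) by positivity))
    have e1 : (p * ((m^2 - m*D) * (1 + m^2)⁻¹)) * (((n:ℝ) - 1) * ((n:ℝ) - 2) * (1 + M^2)⁻¹) *
        ((1 + m^2)^2 * (1 + M^2)) =
        p * ((n:ℝ) - 2) * (m * ((m - D) * (1 + m^2))) * ((n:ℝ) - 1) := by
      field_simp
    have e2 : ((n:ℝ) - 1) * ((m^2 + m*D) * ((1 + m^2)⁻¹)^2) * ((1 + m^2)^2 * (1 + M^2)) =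
        (1 + M^2) * (m * (m + D)) * ((n:ℝ) - 1) := by
      field_simp
    rw [e1, e2] at h9
    exact h9
  have h_main : p * ((n:ℝ) - 2) * ((m - D) * (1 + m^2)) ≤ (1 + M^2) * (m + D) := by
    have h8' : p * ((n:ℝ) - 2) * (m * ((m - D) * (1 + m^2))) ≤ (1 + M^2) * (m * (m + D)) :=
      (mul_le_mul_iff_of_pos_right hn1R).1 h8
    have e3 : p * ((n:ℝ) - 2) * (m * ((m - D) * (1 + m^2))) =
        m * (p * ((n:ℝ) - 2) * ((m - D) * (1 + m^2))) := by ring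
    have e4 : (1 + M^2) * (m * (m + D)) = m * ((1 + M^2) * (m + D)) := by ring
    rw [e3, e4] at h8'
    exact (mul_le_mul_iff_of_pos_left hm0).1 h8'
  -- feed the final algebraic lemma
  have hp_val : p = (1 + Sg) / (2 * n) := by
    rw [hpdef, sum_inAffinity_erase hn2 X ρ i0, hSg]
  have h4K : 4 / K = p * ((n:ℝ) - 2) := by
    rw [hp_val, hKdef]
    have h1 : ((n:ℝ) - 2) ≠ 0 := by linarith
    have h2 : (1 + Sg) ≠ 0 := by linarith
    have h3 : (n:ℝ) ≠ 0 := by linarith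
    field_simp
    ring
  apply alg3 α D M K hgt hD0 hMdef hKpos
  rw [h4K, ← hmdef]
  exact h_main

/-- Theorem `outlier_abs`: a stationary t-SNE embedding cannot depict an
extreme outlier; its outlier number is bounded in terms of the input affinities. -/
theorem outlier_bound (n d : ℕ) (hn : 2 < n) (hd : 1 ≤ d)
    (ρ : ℝ) (hρ : 1 < ρ) (hρ' : ρ < (n : ℝ) - 1)
    (Y : Fin n → EuclideanSpace ℝ (Fin d)) (hY : Y ∈ IMTSNE n d ρ)
    (X : Fin n → EuclideanSpace ℝ (Fin (n - 1))) (hYX : Y ∈ TSNE d ρ X) :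
    outlierNumber Y ⟨0, by omega⟩ ≤
      Real.sqrt (1 + (1 + 2 / ((n : ℝ) - 2)) *
        (8 / (1 + ∑ i ∈ Finset.univ.erase (⟨0, by omega⟩ : Fin n),
          condAffinity X (sigmaStar X ρ i) i ⟨0, by omega⟩))) := by
  exact outlier_bound_aux hn ρ Y X hYX ⟨0, by omega⟩

end TSNEPaper
end
end

section
/- Fix integers n > k > 1, an n-point dataset X ⊂ ℝ^{n−1}, and a partition C_1 ⊔ ⋯ ⊔ C_k = [n] such that the Calinski–Harabasz index satisfies CH(X; C_1,…,C_k) > 1. Then for every ε with 1 < ε ≤ CH(X; C_1,…,C_k), there exists an n-point dataset X_ε ⊂ ℝ^{n−1} with CH(X_ε; C_1,…,C_k) = ε, and yet for every perplexity ρ ∈ (1, n−1), TSNE_ρ(X) = TSNE_ρ(X_ε). -/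
open scoped BigOperators RealInnerProductSpace
noncomputable section

namespace TSNEPaper

variable {n k : ℕ} {E F : Type*}

/-! ### Auxiliary lemmas for `CH_impostor` -/

section Aux

open Finset

lemma euclid_norm_sq {ι : Type*} [Fintype ι] (x : EuclideanSpace ℝ ι) : ‖x‖^2 = ∑ i, x i ^ 2 := by
  rw [EuclideanSpace.norm_eq, Real.sq_sqrt (by positivity)]
  simp [Real.norm_eq_abs, sq_abs]

lemma extend_isometry {m N : ℕ} (h : m ≤ N) :
    ∃ T : EuclideanSpace ℝ (Fin m) →ₗ[ℝ] EuclideanSpace ℝ (Fin N), ∀ x, ‖T x‖ = ‖x‖ := by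
  set g : Fin m → Fin N := Fin.castLE h with hgdef
  have hg : Function.Injective g := Fin.castLE_injective h
  set E : EuclideanSpace ℝ (Fin m) → EuclideanSpace ℝ (Fin N) :=
    fun x => (WithLp.equiv 2 (Fin N → ℝ)).symm (Function.extend g (x : Fin m → ℝ) 0) with hE
  have hEapp : ∀ (x : EuclideanSpace ℝ (Fin m)) (q : Fin N),
      E x q = Function.extend g (x : Fin m → ℝ) 0 q := fun x q => rfl
  have hext : ∀ (x : EuclideanSpace ℝ (Fin m)) (i : Fin m), E x (g i) = x i := fun x i =>
    hg.extend_apply _ _ _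
  have hext' : ∀ (x : EuclideanSpace ℝ (Fin m)) (q : Fin N), (¬∃ i, g i = q) → E x q = 0 :=
    fun x q hq => by rw [hEapp, Function.extend_apply' _ _ _ hq]; rfl
  refine ⟨{ toFun := E, map_add' := ?_, map_smul' := ?_ }, ?_⟩
  · intro x y
    ext q
    show E (x + y) q = (E x + E y) q
    rw [PiLp.add_apply (p := 2)]
    by_cases hq : ∃ i, g i = q
    · obtain ⟨i, rfl⟩ := hq
      rw [hext, hext, hext]; rfl
    · rw [hext' _ _ hq, hext' _ _ hq, hext' _ _ hq]; ring
  · intro c x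
    ext q
    show E (c • x) q = (c • E x) q
    rw [PiLp.smul_apply (p := 2)]
    by_cases hq : ∃ i, g i = q
    · obtain ⟨i, rfl⟩ := hq
      rw [hext, hext]; rfl
    · rw [hext' _ _ hq, hext' _ _ hq]; simp
  · intro x
    have h2 : ‖E x‖^2 = ‖x‖^2 := by
      rw [euclid_norm_sq, euclid_norm_sq]
      calc ∑ q : Fin N, E x q ^ 2
          = ∑ q ∈ Finset.univ.image g, E x q ^ 2 := by
            refine (Finset.sum_subset (Finset.subset_univ _) ?_).symm
            intro q _ hq
            rw [hext' _ _ (by simpa [Finset.mem_image] using hq)]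
            simp
        _ = ∑ i : Fin m, E x (g i) ^ 2 :=
            Finset.sum_image (fun i _ j _ hij => hg hij)
        _ = ∑ i : Fin m, x i ^ 2 := Finset.sum_congr rfl fun i _ => by rw [hext]
    calc ‖E x‖ = √(‖E x‖^2) := (Real.sqrt_sq (norm_nonneg _)).symm
      _ = √(‖x‖^2) := by rw [h2]
      _ = ‖x‖ := Real.sqrt_sq (norm_nonneg _)

lemma euclid_sum_apply {α ι : Type*} [Fintype ι] (s : Finset α) (f : α → EuclideanSpace ℝ ι)
    (q : ι) : (∑ a ∈ s, f a) q = ∑ a ∈ s, f a q := by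
  induction s using Finset.cons_induction with
  | empty => rfl
  | cons a s ha ih => rw [Finset.sum_cons, Finset.sum_cons, PiLp.add_apply, ih]

lemma euclid_centroid_apply {ι : Type*} [Fintype ι] (f : Fin n → EuclideanSpace ℝ ι)
    (C : Finset (Fin n)) (q : ι) :
    centroid f C q = ((C.card : ℝ))⁻¹ * ∑ i ∈ C, f i q := by
  unfold centroid
  rw [PiLp.smul_apply (p := 2), euclid_sum_apply]
  rfl

/-- Concatenation of two Euclidean vectors. -/
def catE {ι κ : Type*} [Fintype ι] [Fintype κ] (u : EuclideanSpace ℝ ι) (v : EuclideanSpace ℝ κ) :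
    EuclideanSpace ℝ (ι ⊕ κ) :=
  (WithLp.equiv 2 _).symm (Sum.elim (u : ι → ℝ) (v : κ → ℝ))

lemma catE_inl {ι κ : Type*} [Fintype ι] [Fintype κ] (u : EuclideanSpace ℝ ι)
    (v : EuclideanSpace ℝ κ) (p : ι) : catE u v (Sum.inl p) = u p := rfl

lemma catE_inr {ι κ : Type*} [Fintype ι] [Fintype κ] (u : EuclideanSpace ℝ ι)
    (v : EuclideanSpace ℝ κ) (q : κ) : catE u v (Sum.inr q) = v q := rfl

lemma catE_sub {ι κ : Type*} [Fintype ι] [Fintype κ] (u u' : EuclideanSpace ℝ ι)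
    (v v' : EuclideanSpace ℝ κ) : catE u v - catE u' v' = catE (u - u') (v - v') := by
  ext t
  rw [PiLp.sub_apply (p := 2)]
  cases t with
  | inl p => rw [catE_inl, catE_inl, catE_inl, PiLp.sub_apply (p := 2)]
  | inr q => rw [catE_inr, catE_inr, catE_inr, PiLp.sub_apply (p := 2)]

lemma catE_norm_sq {ι κ : Type*} [Fintype ι] [Fintype κ] (u : EuclideanSpace ℝ ι)
    (v : EuclideanSpace ℝ κ) : ‖catE u v‖^2 = ‖u‖^2 + ‖v‖^2 := by
  rw [euclid_norm_sq, euclid_norm_sq, euclid_norm_sq, Fintype.sum_sum_type]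
  simp only [catE_inl, catE_inr]

lemma catE_centroid {ι κ : Type*} [Fintype ι] [Fintype κ] (f : Fin n → EuclideanSpace ℝ ι)
    (g : Fin n → EuclideanSpace ℝ κ) (C : Finset (Fin n)) :
    centroid (fun i => catE (f i) (g i)) C = catE (centroid f C) (centroid g C) := by
  ext t
  rw [euclid_centroid_apply]
  cases t with
  | inl p =>
    rw [catE_inl, euclid_centroid_apply]
    congr 1
  | inr q =>
    rw [catE_inr, euclid_centroid_apply]
    congr 1

lemma centroid_sub_const [NormedAddCommGroup E] [NormedSpace ℝ E] (f : Fin n → E) (v : E)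
    (C : Finset (Fin n)) (hC : C.Nonempty) :
    centroid (fun i => f i - v) C = centroid f C - v := by
  unfold centroid
  have hc : ((C.card : ℝ)) ≠ 0 := Nat.cast_ne_zero.mpr (Finset.card_ne_zero_of_mem hC.choose_spec)
  rw [Finset.sum_sub_distrib, Finset.sum_const, smul_sub, ← Nat.cast_smul_eq_nsmul ℝ, smul_smul,
    inv_mul_cancel₀ hc, one_smul]

lemma map_centroid [NormedAddCommGroup E] [NormedSpace ℝ E] [NormedAddCommGroup F]
    [NormedSpace ℝ F] (T : E →ₗ[ℝ] F) (f : Fin n → E) (C : Finset (Fin n)) :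
    centroid (fun i => T (f i)) C = T (centroid f C) := by
  unfold centroid
  rw [map_smul, map_sum]

lemma simplex_centroid_apply (a : ℝ) (C : Finset (Fin n)) (q : Fin n) :
    centroid (fun i => (EuclideanSpace.single i a : EuclideanSpace ℝ (Fin n))) C q
      = ((C.card : ℝ))⁻¹ * (if q ∈ C then a else 0) := by
  rw [euclid_centroid_apply]
  congr 1
  simp only [EuclideanSpace.single_apply]
  exact Finset.sum_ite_eq C q (fun _ => a)

lemma simplex_dist (a : ℝ) {i j : Fin n} (hij : i ≠ j) :
    ‖(EuclideanSpace.single i a : EuclideanSpace ℝ (Fin n)) - EuclideanSpace.single j a‖^2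
      = 2 * a^2 := by
  rw [euclid_norm_sq]
  have h0 : ∀ q ∈ (Finset.univ : Finset (Fin n)), q ∉ ({i, j} : Finset (Fin n)) →
      ((EuclideanSpace.single i a : EuclideanSpace ℝ (Fin n)) - EuclideanSpace.single j a) q ^ 2
        = 0 := by
    intro q _ hq
    simp only [Finset.mem_insert, Finset.mem_singleton, not_or] at hq
    rw [PiLp.sub_apply (p := 2), EuclideanSpace.single_apply, EuclideanSpace.single_apply,
      if_neg hq.1, if_neg hq.2]
    ring
  rw [← Finset.sum_subset (Finset.subset_univ ({i, j} : Finset (Fin n))) h0,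
    Finset.sum_pair hij, PiLp.sub_apply (p := 2), PiLp.sub_apply (p := 2),
    EuclideanSpace.single_apply, EuclideanSpace.single_apply, EuclideanSpace.single_apply,
    EuclideanSpace.single_apply, if_pos rfl, if_pos rfl, if_neg hij, if_neg (Ne.symm hij)]
  ring

lemma simplex_within (a : ℝ) (C : Finset (Fin n)) {i : Fin n} (hi : i ∈ C) :
    ‖(EuclideanSpace.single i a : EuclideanSpace ℝ (Fin n))
        - centroid (fun j => (EuclideanSpace.single j a : EuclideanSpace ℝ (Fin n))) C‖^2
      = a^2 * (1 - ((C.card : ℝ))⁻¹) := by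
  have hcard : (0:ℕ) < C.card := Finset.card_pos.mpr ⟨i, hi⟩
  have hc : ((C.card : ℝ)) ≠ 0 := Nat.cast_ne_zero.mpr hcard.ne'
  rw [euclid_norm_sq]
  have happ : ∀ q : Fin n,
      ((EuclideanSpace.single i a : EuclideanSpace ℝ (Fin n))
        - centroid (fun j => (EuclideanSpace.single j a : EuclideanSpace ℝ (Fin n))) C) q
      = (if q = i then a else 0) - ((C.card : ℝ))⁻¹ * (if q ∈ C then a else 0) := by
    intro q
    rw [PiLp.sub_apply (p := 2), simplex_centroid_apply, EuclideanSpace.single_apply]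
  have h0 : ∀ q ∈ (Finset.univ : Finset (Fin n)), q ∉ C →
      (((EuclideanSpace.single i a : EuclideanSpace ℝ (Fin n))
        - centroid (fun j => (EuclideanSpace.single j a : EuclideanSpace ℝ (Fin n))) C) q)^2
        = 0 := by
    intro q _ hq
    rw [happ, if_neg (by rintro rfl; exact hq hi), if_neg hq]
    ring
  rw [← Finset.sum_subset (Finset.subset_univ C) h0, ← Finset.add_sum_erase C _ hi]
  have h1 : ∀ q ∈ C.erase i,
      (((EuclideanSpace.single i a : EuclideanSpace ℝ (Fin n))
        - centroid (fun j => (EuclideanSpace.single j a : EuclideanSpace ℝ (Fin n))) C) q)^2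
      = (((C.card : ℝ))⁻¹ * a)^2 := by
    intro q hq
    rw [happ, if_neg (Finset.mem_erase.mp hq).1, if_pos (Finset.mem_erase.mp hq).2]
    ring
  rw [Finset.sum_congr rfl h1, Finset.sum_const, Finset.card_erase_of_mem hi, happ,
    if_pos rfl, if_pos hi, nsmul_eq_mul, Nat.cast_sub hcard]
  field_simp
  ring

lemma simplex_between (a : ℝ) (C : Finset (Fin n)) (hC : C.Nonempty) :
    ‖centroid (fun j => (EuclideanSpace.single j a : EuclideanSpace ℝ (Fin n))) C
        - centroid (fun j => (EuclideanSpace.single j a : EuclideanSpace ℝ (Fin n)))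
            Finset.univ‖^2
      = a^2 * (((C.card : ℝ))⁻¹ - ((n : ℝ))⁻¹) := by
  obtain ⟨i0, hi0⟩ := hC
  have hcard : (0:ℕ) < C.card := Finset.card_pos.mpr ⟨i0, hi0⟩
  have hc : ((C.card : ℝ)) ≠ 0 := Nat.cast_ne_zero.mpr hcard.ne'
  have hn : (0:ℕ) < n := Fin.pos i0
  have hnR : ((n : ℝ)) ≠ 0 := Nat.cast_ne_zero.mpr hn.ne'
  have hcu : (Finset.univ : Finset (Fin n)).card = n := by
    rw [Finset.card_univ, Fintype.card_fin]
  have hCle : C.card ≤ n := le_trans (Finset.card_le_univ C) (le_of_eq hcu)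
  rw [euclid_norm_sq]
  have happ : ∀ q : Fin n,
      (centroid (fun j => (EuclideanSpace.single j a : EuclideanSpace ℝ (Fin n))) C
        - centroid (fun j => (EuclideanSpace.single j a : EuclideanSpace ℝ (Fin n)))
            Finset.univ) q
      = ((C.card : ℝ))⁻¹ * (if q ∈ C then a else 0) - ((n:ℝ))⁻¹ * a := by
    intro q
    rw [PiLp.sub_apply (p := 2), simplex_centroid_apply, simplex_centroid_apply, hcu,
      if_pos (Finset.mem_univ q)]
  have hsplit : ∀ q ∈ (Finset.univ : Finset (Fin n)),
      ((centroid (fun j => (EuclideanSpace.single j a : EuclideanSpace ℝ (Fin n))) C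
        - centroid (fun j => (EuclideanSpace.single j a : EuclideanSpace ℝ (Fin n)))
            Finset.univ) q)^2
      = if q ∈ C then (((C.card : ℝ))⁻¹ * a - ((n:ℝ))⁻¹ * a)^2 else (((n:ℝ))⁻¹ * a)^2 := by
    intro q _
    by_cases hq : q ∈ C
    · rw [happ, if_pos hq, if_pos hq]
    · rw [happ, if_neg hq, if_neg hq]; ring
  rw [Finset.sum_congr rfl hsplit, Finset.sum_ite, Finset.sum_const, Finset.sum_const]
  have hf1 : (Finset.univ.filter (fun q => q ∈ C)).card = C.card := by
    congr 1
    ext q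
    simp
  have hf2 : (Finset.univ.filter (fun q => ¬ q ∈ C)).card = n - C.card := by
    have := Finset.card_filter_add_card_filter_not
      (s := (Finset.univ : Finset (Fin n))) (p := fun q => q ∈ C)
    rw [hcu, hf1] at this
    omega
  rw [hf1, hf2, nsmul_eq_mul, nsmul_eq_mul, Nat.cast_sub hCle]
  field_simp
  ring

lemma sq_norm_le_iff {a b : ℝ} (ha : 0 ≤ a) (hb : 0 ≤ b) : a ≤ b ↔ a^2 ≤ b^2 := by
  constructor
  · intro h; exact pow_le_pow_left₀ ha h 2
  · intro h; exact le_of_pow_le_pow_left₀ two_ne_zero hb h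

lemma nearestSet_congr {E E' : Type*} [NormedAddCommGroup E] [NormedAddCommGroup E']
    {X : Fin n → E} {X' : Fin n → E'} {c : ℝ}
    (h : ∀ i j, i ≠ j → ‖X' i - X' j‖^2 = ‖X i - X j‖^2 + c) :
    nearestSet X' = nearestSet X := by
  have key : ∀ i j l : Fin n, j ≠ i → l ≠ i →
      (‖X' i - X' j‖ ≤ ‖X' i - X' l‖ ↔ ‖X i - X j‖ ≤ ‖X i - X l‖) := by
    intro i j l hj hl
    rw [sq_norm_le_iff (norm_nonneg _) (norm_nonneg _),
        sq_norm_le_iff (norm_nonneg (X i - X j)) (norm_nonneg _),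
        h i j (Ne.symm hj), h i l (Ne.symm hl), add_le_add_iff_right]
  funext i
  unfold nearestSet
  ext j
  simp only [Finset.mem_filter, Finset.mem_erase, Finset.mem_univ, and_true, true_and]
  constructor
  · rintro ⟨hj, hall⟩
    exact ⟨hj, fun l hl => (key i j l hj hl).mp (hall l hl)⟩
  · rintro ⟨hj, hall⟩
    exact ⟨hj, fun l hl => (key i j l hj hl).mpr (hall l hl)⟩

lemma condAffinity_congr {E E' : Type*} [NormedAddCommGroup E] [NormedAddCommGroup E']
    {X : Fin n → E} {X' : Fin n → E'} {c : ℝ}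
    (h : ∀ i j, i ≠ j → ‖X' i - X' j‖^2 = ‖X i - X j‖^2 + c) :
    condAffinity X' = condAffinity X := by
  funext σ i j
  unfold condAffinity
  by_cases hji : j = i
  · rw [if_pos hji, if_pos hji]
  rw [if_neg hji, if_neg hji, nearestSet_congr h]
  by_cases hσ : σ = 0
  · rw [if_pos hσ, if_pos hσ]
  rw [if_neg hσ, if_neg hσ]
  have hfac : ∀ l : Fin n, l ≠ i →
      Real.exp (-‖X' i - X' l‖^2 / (2*σ^2))
        = Real.exp (-c / (2*σ^2)) * Real.exp (-‖X i - X l‖^2 / (2*σ^2)) := by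
    intro l hl
    rw [← Real.exp_add, h i l (Ne.symm hl)]
    congr 1
    ring
  rw [hfac j hji, Finset.sum_congr rfl (fun l hl => hfac l (Finset.mem_erase.mp hl).1),
    ← Finset.mul_sum, mul_div_mul_left _ _ (Real.exp_ne_zero _)]

lemma TSNE_congr {E E' : Type*} [NormedAddCommGroup E] [NormedAddCommGroup E']
    {X : Fin n → E} {X' : Fin n → E'}
    (h : condAffinity X' = condAffinity X) (d : ℕ) (ρ : ℝ) :
    TSNE (n := n) d ρ X = TSNE d ρ X' := by
  have hcal : IsCalibrated X' = IsCalibrated X := by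
    unfold IsCalibrated; rw [h]
  have hsig : sigmaStar X' = sigmaStar X := by
    unfold sigmaStar; rw [hcal]
  have hin : inAffinity X' = inAffinity X := by
    unfold inAffinity; rw [h, hsig]
  have hloss : tsneLoss (d := d) X' = tsneLoss X := by
    unfold tsneLoss; rw [hin]
  unfold TSNE
  rw [hloss]

lemma exists_shift_s5 {n : ℕ} (hn : 0 < n) (X : Fin n → EuclideanSpace ℝ (Fin (n-1)))
    (c : ℝ) (hc : 0 ≤ c) :
    ∃ X' : Fin n → EuclideanSpace ℝ (Fin (n-1)),
      (∀ i j, i ≠ j → ‖X' i - X' j‖^2 = ‖X i - X j‖^2 + c) ∧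
      (∀ C : Finset (Fin n), ∀ i ∈ C,
        ‖X' i - centroid X' C‖^2
          = ‖X i - centroid X C‖^2 + (c/2) * (1 - ((C.card:ℝ))⁻¹)) ∧
      (∀ C : Finset (Fin n), C.Nonempty →
        ‖centroid X' C - centroid X' Finset.univ‖^2
          = ‖centroid X C - centroid X Finset.univ‖^2
            + (c/2) * (((C.card:ℝ))⁻¹ - ((n:ℝ))⁻¹)) := by
  classical
  have ha2 : (Real.sqrt (c/2))^2 = c/2 := Real.sq_sqrt (by linarith)
  set a := Real.sqrt (c/2) with ha
  set s : Fin n → EuclideanSpace ℝ (Fin n) :=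
    fun i => EuclideanSpace.single i a with hs
  set y : Fin n → EuclideanSpace ℝ (Fin (n-1) ⊕ Fin n) := fun i => catE (X i) (s i) with hy
  set j0 : Fin n := ⟨0, hn⟩ with hj0
  set z : Fin n → EuclideanSpace ℝ (Fin (n-1) ⊕ Fin n) := fun i => y i - y j0 with hz
  set S : Submodule ℝ (EuclideanSpace ℝ (Fin (n-1) ⊕ Fin n)) :=
    Submodule.span ℝ (Set.range z) with hSdef
  have hzmem : ∀ i, z i ∈ S := fun i => Submodule.subset_span ⟨i, rfl⟩
  have hz0 : z j0 = 0 := sub_self _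
  have h1 : S = Submodule.span ℝ (((Finset.univ.erase j0).image z : Finset _) : Set _) := by
    apply le_antisymm
    · rw [hSdef, Submodule.span_le]
      rintro w ⟨i, rfl⟩
      by_cases hi : i = j0
      · rw [hi, hz0]; exact Submodule.zero_mem _
      · exact Submodule.subset_span
          (Finset.mem_coe.mpr (Finset.mem_image_of_mem z
            (Finset.mem_erase.mpr ⟨hi, Finset.mem_univ i⟩)))
    · rw [Submodule.span_le]
      intro w hw
      rw [Finset.mem_coe, Finset.mem_image] at hw
      obtain ⟨i, _, rfl⟩ := hw
      exact hzmem i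
  have hrank : Module.finrank ℝ S ≤ n - 1 := by
    rw [h1]
    refine le_trans (finrank_span_finset_le_card _) (le_trans Finset.card_image_le ?_)
    rw [Finset.card_erase_of_mem (Finset.mem_univ j0), Finset.card_univ, Fintype.card_fin]
  obtain ⟨T0, hT0⟩ := extend_isometry hrank
  set B := stdOrthonormalBasis ℝ S with hB
  set L : EuclideanSpace ℝ (Fin (n-1) ⊕ Fin n) →ₗ[ℝ] EuclideanSpace ℝ (Fin (n-1)) :=
    T0 ∘ₗ (B.repr.toLinearEquiv.toLinearMap ∘ₗ (Submodule.orthogonalProjection S).toLinearMap) with hL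
  have hLnorm : ∀ w ∈ S, ‖L w‖ = ‖w‖ := by
    intro w hw
    have hproj : Submodule.orthogonalProjection S w = ⟨w, hw⟩ :=
      Submodule.orthogonalProjection_mem_subspace_eq_self (⟨w, hw⟩ : S)
    have : L w = T0 (B.repr (Submodule.orthogonalProjection S w)) := rfl
    rw [this, hproj, hT0, B.repr.norm_map]
    rfl
  have hcmem : ∀ C : Finset (Fin n), centroid z C ∈ S := by
    intro C
    unfold centroid
    exact Submodule.smul_mem _ _ (Submodule.sum_mem _ fun i _ => hzmem i)
  have hzsub : ∀ i j, z i - z j = y i - y j := fun i j => sub_sub_sub_cancel_right _ _ _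
  have hycat : ∀ C : Finset (Fin n), centroid y C = catE (centroid X C) (centroid s C) :=
    fun C => catE_centroid X s C
  have hcz : ∀ C : Finset (Fin n), C.Nonempty → centroid z C = centroid y C - y j0 :=
    fun C hC => centroid_sub_const y (y j0) C hC
  have huniv : (Finset.univ : Finset (Fin n)).Nonempty := ⟨j0, Finset.mem_univ _⟩
  refine ⟨fun i => L (z i), ?_, ?_, ?_⟩
  · intro i j hij
    rw [← map_sub, hLnorm _ (sub_mem (hzmem i) (hzmem j)), hzsub]
    show ‖catE (X i) (s i) - catE (X j) (s j)‖^2 = _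
    rw [catE_sub, catE_norm_sq, hs]
    rw [simplex_dist a hij, ha2]
    ring
  · intro C i hiC
    have hCne : C.Nonempty := ⟨i, hiC⟩
    rw [map_centroid L z C, ← map_sub, hLnorm _ (sub_mem (hzmem i) (hcmem C)), hcz C hCne]
    have : z i - (centroid y C - y j0) = y i - centroid y C := by
      rw [hz]; exact sub_sub_sub_cancel_right _ _ _
    rw [this, hycat C]
    show ‖catE (X i) (s i) - catE (centroid X C) (centroid s C)‖^2 = _
    rw [catE_sub, catE_norm_sq, hs]
    rw [simplex_within a C hiC, ha2]
  · intro C hCne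
    rw [map_centroid L z C, map_centroid L z Finset.univ, ← map_sub,
      hLnorm _ (sub_mem (hcmem C) (hcmem Finset.univ)), hcz C hCne, hcz Finset.univ huniv]
    have : centroid y C - y j0 - (centroid y Finset.univ - y j0)
        = centroid y C - centroid y Finset.univ := by abel
    rw [this, hycat C, hycat Finset.univ, catE_sub, catE_norm_sq, hs]
    rw [simplex_between a C hCne, ha2]

end Aux

/-- Theorem `unclustHammerCH`: any stationary t-SNE output can be produced by
an input whose Calinski–Harabasz index is any prescribed value in `(1, CH(X)]`. -/
theorem CH_impostor (n k d : ℕ) (hk : 1 < k) (hkn : k < n) (hd : 1 ≤ d)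
    (X : Fin n → EuclideanSpace ℝ (Fin (n - 1)))
    (ℓ : Fin n → Fin k)
    (hCH : 1 < CHindex X ℓ) :
    ∀ ε : EReal, 1 < ε → ε ≤ CHindex X ℓ →
      ∃ Xε : Fin n → EuclideanSpace ℝ (Fin (n - 1)),
        CHindex Xε ℓ = ε ∧
        ∀ ρ : ℝ, 1 < ρ → ρ < (n : ℝ) - 1 → TSNE d ρ X = TSNE d ρ Xε := by
  classical
  intro ε hε1 hεCH
  by_cases hεtop : ε = ⊤
  · have hchtop : CHindex X ℓ = ⊤ := top_le_iff.mp (hεtop ▸ hεCH)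
    exact ⟨X, by rw [hchtop, hεtop], fun ρ _ _ => rfl⟩
  have hεbot : ε ≠ ⊥ := by
    intro hb
    rw [hb] at hε1
    exact not_lt_bot hε1
  have hεe : ε = ((ε.toReal : ℝ) : EReal) := (EReal.coe_toReal hεtop hεbot).symm
  set e := ε.toReal with hedef
  have he1 : (1:ℝ) < e := by
    rw [hεe] at hε1
    exact_mod_cast hε1
  have hnpos : 0 < n := by omega
  have hn0 : ((n:ℝ)) ≠ 0 := Nat.cast_ne_zero.mpr hnpos.ne'
  have hkR : (0:ℝ) < (k:ℝ) - 1 := by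
    have : (1:ℝ) < (k:ℝ) := by exact_mod_cast hk
    linarith
  have hknR : (k:ℝ) < (n:ℝ) := by exact_mod_cast hkn
  have hnkR : (0:ℝ) < (n:ℝ) - (k:ℝ) := by linarith
  -- nonnegativity of chNum and chDen
  have hN0 : 0 ≤ chNum X ℓ := by
    unfold chNum
    refine mul_nonneg (inv_nonneg.mpr hkR.le) (Finset.sum_nonneg fun m _ => ?_)
    exact mul_nonneg (Nat.cast_nonneg _) (pow_nonneg (norm_nonneg _) 2)
  have hD0 : 0 ≤ chDen X ℓ := by
    unfold chDen
    refine mul_nonneg (inv_nonneg.mpr hnkR.le) (Finset.sum_nonneg fun m _ => ?_)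
    exact Finset.sum_nonneg fun i _ => pow_nonneg (norm_nonneg _) 2
  -- consequences of 1 < CH and ε ≤ CH
  have hkey : chDen X ℓ < chNum X ℓ ∧ e * chDen X ℓ ≤ chNum X ℓ := by
    by_cases hD : chDen X ℓ = 0
    · have hNne : chNum X ℓ ≠ 0 := by
        intro hN
        unfold CHindex at hCH
        rw [if_pos hD, if_pos hN] at hCH
        exact lt_irrefl _ hCH
      constructor
      · rw [hD]
        exact lt_of_le_of_ne hN0 (Ne.symm hNne)
      · rw [hD, mul_zero]
        exact hN0
    · have hDpos : 0 < chDen X ℓ := lt_of_le_of_ne hD0 (Ne.symm hD)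
      have hch : CHindex X ℓ = ((chNum X ℓ / chDen X ℓ : ℝ) : EReal) := by
        unfold CHindex
        rw [if_neg hD]
      have h2 : (1:ℝ) < chNum X ℓ / chDen X ℓ := by
        rw [hch] at hCH
        exact_mod_cast hCH
      have h3 : e ≤ chNum X ℓ / chDen X ℓ := by
        rw [hch, hεe] at hεCH
        exact_mod_cast hεCH
      constructor
      · have := (lt_div_iff₀ hDpos).mp h2
        linarith
      · exact (le_div_iff₀ hDpos).mp h3
  obtain ⟨hND, heD⟩ := hkey
  -- the number of nonempty clusters
  set K : ℝ := (((Finset.univ.filter fun m : Fin k => (cluster ℓ m).Nonempty)).card : ℝ)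
    with hKdef
  have hK1 : 1 ≤ K := by
    have hj0 : (⟨0, hnpos⟩ : Fin n) ∈ cluster ℓ (ℓ ⟨0, hnpos⟩) :=
      Finset.mem_filter.mpr ⟨Finset.mem_univ _, rfl⟩
    have : ℓ ⟨0, hnpos⟩ ∈ Finset.univ.filter fun m : Fin k => (cluster ℓ m).Nonempty :=
      Finset.mem_filter.mpr ⟨Finset.mem_univ _, ⟨_, hj0⟩⟩
    have hcard : 0 < (Finset.univ.filter fun m : Fin k => (cluster ℓ m).Nonempty).card :=
      Finset.card_pos.mpr ⟨_, this⟩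
    rw [hKdef]
    exact_mod_cast hcard
  have hKk : K ≤ (k:ℝ) := by
    have : (Finset.univ.filter fun m : Fin k => (cluster ℓ m).Nonempty).card ≤ k := by
      refine le_trans (Finset.card_filter_le _ _) ?_
      rw [Finset.card_univ, Fintype.card_fin]
    rw [hKdef]
    exact_mod_cast this
  set A : ℝ := ((k:ℝ) - 1)⁻¹ * (K - 1) with hAdef
  set Bq : ℝ := ((n:ℝ) - (k:ℝ))⁻¹ * ((n:ℝ) - K) with hBdef
  have hA0 : 0 ≤ A := mul_nonneg (inv_nonneg.mpr hkR.le) (by linarith)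
  have hBpos : 0 < Bq := mul_pos (inv_pos.mpr hnkR) (by linarith)
  have hAB : A ≤ Bq := by
    rw [hAdef, hBdef, inv_mul_eq_div, inv_mul_eq_div, div_le_div_iff₀ hkR hnkR]
    nlinarith
  have hdenpos : (0:ℝ) < e * Bq - A := by nlinarith
  set t : ℝ := (chNum X ℓ - e * chDen X ℓ) / (e * Bq - A) with htdef
  have ht : 0 ≤ t := div_nonneg (by linarith) hdenpos.le
  obtain ⟨Xε, hdist, hwithin, hbetween⟩ := exists_shift_s5 hnpos X (2*t) (by linarith)
  have hc2 : (2*t)/2 = t := by ring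
  -- total cardinality of clusters
  have hsumcard : ∑ m : Fin k, ((cluster ℓ m).card : ℝ) = (n:ℝ) := by
    have h := Finset.card_eq_sum_card_fiberwise
      (f := ℓ) (s := Finset.univ) (t := Finset.univ) (fun x _ => Finset.mem_univ _)
    have h2 : (((Finset.univ : Finset (Fin n)).card : ℝ)) = (n:ℝ) := by
      rw [Finset.card_univ, Fintype.card_fin]
    rw [← h2, h]
    push_cast
    rfl
  have hsumind : ∑ m : Fin k, (if (cluster ℓ m).Nonempty then (1:ℝ) else 0) = K := by
    rw [Finset.sum_boole, hKdef]
  -- chNum of Xε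
  have hnum : chNum Xε ℓ = chNum X ℓ + t * A := by
    unfold chNum
    have hterm : ∀ m ∈ (Finset.univ : Finset (Fin k)),
        ((cluster ℓ m).card : ℝ) * ‖centroid Xε (cluster ℓ m) - centroid Xε Finset.univ‖^2
        = ((cluster ℓ m).card : ℝ) * ‖centroid X (cluster ℓ m) - centroid X Finset.univ‖^2
          + ((2*t)/2) * ((if (cluster ℓ m).Nonempty then (1:ℝ) else 0)
            - ((cluster ℓ m).card : ℝ) / (n:ℝ)) := by
      intro m _
      by_cases hm : (cluster ℓ m).Nonempty
      · rw [hbetween _ hm, if_pos hm]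
        have hcm : ((cluster ℓ m).card : ℝ) ≠ 0 :=
          Nat.cast_ne_zero.mpr (Finset.card_pos.mpr hm).ne'
        linear_combination ((2*t)/2) * mul_inv_cancel₀ hcm
      · rw [Finset.not_nonempty_iff_eq_empty.mp hm]
        simp
    rw [Finset.sum_congr rfl hterm, Finset.sum_add_distrib, mul_add]
    congr 1
    rw [← Finset.mul_sum, Finset.sum_sub_distrib, hsumind, ← Finset.sum_div, hsumcard,
      div_self hn0, hc2, hAdef]
    ring
  -- chDen of Xε
  have hden : chDen Xε ℓ = chDen X ℓ + t * Bq := by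
    unfold chDen
    have hterm : ∀ m ∈ (Finset.univ : Finset (Fin k)),
        (∑ i ∈ cluster ℓ m, ‖Xε i - centroid Xε (cluster ℓ m)‖^2)
        = (∑ i ∈ cluster ℓ m, ‖X i - centroid X (cluster ℓ m)‖^2)
          + ((2*t)/2) * (((cluster ℓ m).card : ℝ)
            - (if (cluster ℓ m).Nonempty then (1:ℝ) else 0)) := by
      intro m _
      by_cases hm : (cluster ℓ m).Nonempty
      · rw [Finset.sum_congr rfl (fun i hi => hwithin (cluster ℓ m) i hi),
          Finset.sum_add_distrib, Finset.sum_const, nsmul_eq_mul, if_pos hm]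
        have hcm : ((cluster ℓ m).card : ℝ) ≠ 0 :=
          Nat.cast_ne_zero.mpr (Finset.card_pos.mpr hm).ne'
        congr 1
        field_simp
        all_goals ring
      · rw [Finset.not_nonempty_iff_eq_empty.mp hm]
        simp
    rw [Finset.sum_congr rfl hterm, Finset.sum_add_distrib, mul_add]
    congr 1
    rw [← Finset.mul_sum, Finset.sum_sub_distrib, hsumind, hsumcard, hc2, hBdef]
    ring
  -- final arithmetic
  have hdpos : 0 < chDen Xε ℓ := by
    rw [hden, htdef]
    have h4 : chDen X ℓ + (chNum X ℓ - e * chDen X ℓ) / (e * Bq - A) * Bq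
        = (Bq * chNum X ℓ - A * chDen X ℓ) / (e * Bq - A) := by
      field_simp
      ring
    rw [h4]
    refine div_pos ?_ hdenpos
    have h5 : A * chDen X ℓ ≤ Bq * chDen X ℓ := mul_le_mul_of_nonneg_right hAB hD0
    have h6 : Bq * chDen X ℓ < Bq * chNum X ℓ := (mul_lt_mul_iff_right₀ hBpos).mpr hND
    linarith
  have hratio : chNum Xε ℓ = e * chDen Xε ℓ := by
    rw [hnum, hden, htdef]
    field_simp
    ring
  refine ⟨Xε, ?_, fun ρ _ _ => TSNE_congr (condAffinity_congr hdist) d ρ⟩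
  unfold CHindex
  rw [if_neg hdpos.ne', hratio, mul_div_assoc, div_self hdpos.ne', mul_one, hεe]

end TSNEPaper
end
end
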